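/- arXiv:2002.11364 — 8 statements merged into one kernel-verified Lean document; each statement's English description precedes it below -/
import Mathlib

section
/- Let f : ℝ^d → ℝ be convex and differentiable with L-Lipschitz continuous gradient (L > 0), with a minimizer x*. Let ω ≥ 0 and let C_0, C_1, … be independent ω-compression operators on a probability space. Let the CGD iterates be x^{k+1} = x^k − η C_k(∇f(x^k)) with step size η = 1/((1+ω)L). Then for every k ≥ 1, E[f(x^k)] − f(x*) ≤ (1+ω) L ‖x^0 − x*‖² / k. In particular, an ε-solution with E[f(x^k)] − f(x*) ≤ ε is reached after at most (1+ω) L ‖x^0 − x*‖² / ε iterations. -/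
open MeasureTheory

variable {d : ℕ}

local notation "⟪" x ", " y "⟫" => inner (𝕜 := ℝ) x y
local notation "E" => EuclideanSpace ℝ (Fin d)

section calcpart
variable {F : Type*} [NormedAddCommGroup F] [InnerProductSpace ℝ F] [CompleteSpace F]

lemma fderiv_eq_inner_gradient (f : F → ℝ) (x v : F) :
    fderiv ℝ f x v = ⟪gradient f x, v⟫ := by
  rw [gradient, ← InnerProductSpace.toDual_symm_apply]

lemma hasDerivAt_line (f : F → ℝ) (hdiff : Differentiable ℝ f) (x v : F) (t : ℝ) :
    HasDerivAt (fun s : ℝ => f (x + s • v)) ⟪gradient f (x + t • v), v⟫ t := by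
  have hc : HasDerivAt (fun s : ℝ => x + s • v) v t := by
    simpa using ((hasDerivAt_id t).smul_const v).const_add x
  have := ((hdiff (x + t • v)).hasFDerivAt.comp_hasDerivAt t hc)
  rw [fderiv_eq_inner_gradient f] at this
  exact this

/-- convexity gradient inequality -/
lemma convex_grad_ineq (f : F → ℝ) (hconv : ConvexOn ℝ Set.univ f)
    (hdiff : Differentiable ℝ f) (x y : F) :
    f x + ⟪gradient f x, y - x⟫ ≤ f y := by
  set φ : ℝ → ℝ := fun s => f (x + s • (y - x)) with hφ
  have hφconv : ConvexOn ℝ Set.univ φ := by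
    have : AffineMap.lineMap (k := ℝ) x y = fun s : ℝ => x + s • (y - x) := by
      funext s; simp [AffineMap.lineMap_apply]; abel
    have h := hconv.comp_affineMap (AffineMap.lineMap (k := ℝ) x y)
    simp only [this, Set.preimage_univ] at h
    exact h
  have hd : HasDerivAt φ ⟪gradient f x, y - x⟫ 0 := by
    simpa using hasDerivAt_line f hdiff x (y - x) 0
  have h01 : (0:ℝ) < 1 := one_pos
  have := hφconv.le_slope_of_hasDerivAt (Set.mem_univ 0) (Set.mem_univ 1) h01 hd
  rw [slope_def_field] at this
  have hφ0 : φ 0 = f x := by simp [hφ]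
  have hφ1 : φ 1 = f y := by simp [hφ]
  simp [hφ0, hφ1] at this
  rw [fderiv_eq_inner_gradient f, fderiv_eq_inner_gradient f] at this
  have e := inner_sub_right (𝕜 := ℝ) (gradient f x) y x
  linarith [this]

/-- descent lemma -/
lemma descent_lemma (f : F → ℝ) (L : ℝ)
    (hdiff : Differentiable ℝ f)
    (hlip : ∀ x y, ‖gradient f x - gradient f y‖ ≤ L * ‖x - y‖) (x y : F) :
    f y ≤ f x + ⟪gradient f x, y - x⟫ + L / 2 * ‖y - x‖ ^ 2 := by
  set v := y - x with hv
  set h : ℝ → ℝ := fun t => L / 2 * ‖v‖ ^ 2 * t ^ 2 + t * ⟪gradient f x, v⟫ + f x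
      - f (x + t • v) with hh
  have hderiv : ∀ t : ℝ, HasDerivAt h
      (L * ‖v‖ ^ 2 * t + ⟪gradient f x, v⟫ - ⟪gradient f (x + t • v), v⟫) t := by
    intro t
    have h1 : HasDerivAt (fun t : ℝ => L / 2 * ‖v‖ ^ 2 * t ^ 2 + t * ⟪gradient f x, v⟫ + f x)
        (L * ‖v‖ ^ 2 * t + ⟪gradient f x, v⟫) t := by
      have := (((hasDerivAt_pow 2 t).const_mul (L / 2 * ‖v‖ ^ 2)).add
        ((hasDerivAt_id t).mul_const ⟪gradient f x, v⟫)).add_const (f x)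
      refine this.congr_deriv ?_
      ring
    exact h1.sub (hasDerivAt_line f hdiff x v t)
  have hmono : MonotoneOn h (Set.Icc (0:ℝ) 1) := by
    apply monotoneOn_of_deriv_nonneg (convex_Icc 0 1)
    · exact Continuous.continuousOn (by
        have : ∀ t : ℝ, DifferentiableAt ℝ h t := fun t => (hderiv t).differentiableAt
        exact (Differentiable.continuous this))
    · intro t _
      exact (hderiv t).differentiableAt.differentiableWithinAt
    · intro t ht
      rw [interior_Icc] at ht
      rw [(hderiv t).deriv]
      have hb : ⟪gradient f x, v⟫ - ⟪gradient f (x + t • v), v⟫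
          ≥ -(‖gradient f (x + t • v) - gradient f x‖ * ‖v‖) := by
        have := real_inner_le_norm (gradient f (x + t • v) - gradient f x) v
        rw [inner_sub_left] at this
        linarith
      have hlb : ‖gradient f (x + t • v) - gradient f x‖ * ‖v‖ ≤ L * ‖v‖ ^ 2 * t := by
        have h2 := hlip (x + t • v) x
        have h3 : ‖x + t • v - x‖ = t * ‖v‖ := by
          rw [add_sub_cancel_left, norm_smul, Real.norm_eq_abs, abs_of_pos ht.1]
        calc ‖gradient f (x + t • v) - gradient f x‖ * ‖v‖
            ≤ L * (t * ‖v‖) * ‖v‖ := by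
              apply mul_le_mul_of_nonneg_right _ (norm_nonneg v)
              rw [← h3]; exact h2
          _ = L * ‖v‖ ^ 2 * t := by ring
      linarith
  have h01 := hmono (Set.mem_Icc.2 ⟨le_refl 0, zero_le_one⟩)
      (Set.mem_Icc.2 ⟨zero_le_one, le_refl 1⟩) zero_le_one
  have h0 : h 0 = 0 := by simp [hh]
  have h1 : h 1 = L / 2 * ‖v‖ ^ 2 + ⟪gradient f x, v⟫ + f x - f y := by
    simp [hh, hv]
  rw [h0, h1] at h01
  linarith

lemma gradient_min_eq_zero (f : F → ℝ)
    (xstar : F) (hmin : ∀ x, f xstar ≤ f x) : gradient f xstar = 0 := by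
  have h : IsLocalMin f xstar := Filter.Eventually.of_forall fun x => hmin x
  rw [gradient, h.fderiv_eq_zero]
  simp
end calcpart

/-- The one-step lemma over `Ω` for a fixed current point `y`. -/
lemma onestep
    (f : EuclideanSpace ℝ (Fin d) → ℝ) (L : ℝ) (hL : 0 < L)
    (hconv : ConvexOn ℝ Set.univ f)
    (hdiff : Differentiable ℝ f)
    (hlip : ∀ x y, ‖gradient f x - gradient f y‖ ≤ L * ‖x - y‖)
    (xstar : EuclideanSpace ℝ (Fin d)) (hmin : ∀ x, f xstar ≤ f x)
    (om : ℝ) (hom : 0 ≤ om)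
    {Ω : Type*} [MeasureSpace Ω] [IsProbabilityMeasure (volume : Measure Ω)]
    (D : Ω → EuclideanSpace ℝ (Fin d) → EuclideanSpace ℝ (Fin d))
    (hDmeas : Measurable fun q : Ω × EuclideanSpace ℝ (Fin d) => D q.1 q.2)
    (hDint : ∀ v, Integrable (fun ω => D ω v))
    (hDmean : ∀ v, (∫ ω, D ω v) = v)
    (hDsqint : ∀ v, Integrable (fun ω => ‖D ω v - v‖ ^ 2))
    (hDvar : ∀ v, (∫ ω, ‖D ω v - v‖ ^ 2) ≤ om * ‖v‖ ^ 2)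
    (η : ℝ) (hη : η = 1 / ((1 + om) * L))
    (y : EuclideanSpace ℝ (Fin d)) :
    (Integrable (fun ω => ‖(y - η • D ω (gradient f y)) - xstar‖ ^ 2
        + 2 * η * (1 + om) * (f (y - η • D ω (gradient f y)) - f xstar)))
    ∧ (∫ ω, (‖(y - η • D ω (gradient f y)) - xstar‖ ^ 2
        + 2 * η * (1 + om) * (f (y - η • D ω (gradient f y)) - f xstar)))
      ≤ (‖y - xstar‖ ^ 2 + 2 * η * (1 + om) * (f y - f xstar)) - 2 * η * (f y - f xstar)
    ∧ (∫ ω, (f (y - η • D ω (gradient f y)) - f xstar)) ≤ f y - f xstar := by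
  have homL : 0 < (1 + om) * L := by positivity
  have hηpos : 0 < η := by rw [hη]; positivity
  have hηL : (1 + om) * L * η = 1 := by rw [hη]; field_simp
  set g : EuclideanSpace ℝ (Fin d) := gradient f y with hg
  set u : Ω → EuclideanSpace ℝ (Fin d) := fun ω => D ω g with hu
  have humeas : Measurable u := by
    have : u = (fun q : Ω × EuclideanSpace ℝ (Fin d) => D q.1 q.2)
        ∘ (fun ω => (ω, g)) := rfl
    rw [this]
    exact hDmeas.comp (measurable_id.prodMk measurable_const)
  have huint : Integrable u := hDint g
  have husq_meas : Measurable (fun ω => ‖u ω‖ ^ 2) :=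
    (humeas.norm.pow_const 2)
  have husqint : Integrable (fun ω => ‖u ω‖ ^ 2) := by
    have hbd : Integrable (fun ω => 2 * ‖u ω - g‖ ^ 2 + 2 * ‖g‖ ^ 2) :=
      ((hDsqint g).const_mul 2).add (integrable_const _)
    apply Integrable.mono' hbd husq_meas.aestronglyMeasurable
    apply Filter.Eventually.of_forall
    intro ω
    rw [Real.norm_eq_abs, abs_of_nonneg (by positivity)]
    have h1 : ‖u ω‖ ≤ ‖u ω - g‖ + ‖g‖ := by
      simpa using norm_add_le (u ω - g) g
    nlinarith [norm_nonneg (u ω - g), norm_nonneg g, norm_nonneg (u ω), sq_nonneg (‖u ω - g‖ - ‖g‖)]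
  -- mean of inner products
  have hinner_mean : ∀ z : EuclideanSpace ℝ (Fin d), (∫ ω, ⟪z, u ω⟫) = ⟪z, g⟫ := by
    intro z
    have := (innerSL ℝ z).integral_comp_comm huint
    simpa [hu, hDmean g] using this
  have hinner_int : ∀ z : EuclideanSpace ℝ (Fin d), Integrable (fun ω => ⟪z, u ω⟫) :=
    fun z => (innerSL ℝ z).integrable_comp huint
  -- second moment bound
  have hS : (∫ ω, ‖u ω‖ ^ 2) ≤ (1 + om) * ‖g‖ ^ 2 := by
    have hexp : ∀ ω, ‖u ω‖ ^ 2 = ‖u ω - g‖ ^ 2 + 2 * ⟪g, u ω⟫ - ‖g‖ ^ 2 := by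
      intro ω
      have := norm_sub_sq_real (u ω) g
      have h2 : ⟪u ω, g⟫ = ⟪g, u ω⟫ := real_inner_comm _ _
      linarith [this, h2]
    calc (∫ ω, ‖u ω‖ ^ 2) = (∫ ω, (‖u ω - g‖ ^ 2 + 2 * ⟪g, u ω⟫ - ‖g‖ ^ 2)) := by
          congr 1; funext ω; exact hexp ω
      _ = (∫ ω, ‖u ω - g‖ ^ 2) + 2 * (∫ ω, ⟪g, u ω⟫) - ‖g‖ ^ 2 := by
          have hAB : Integrable (fun ω => ‖u ω - g‖ ^ 2 + 2 * ⟪g, u ω⟫) :=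
            (hDsqint g).add ((hinner_int g).const_mul 2)
          rw [integral_sub hAB (integrable_const _),
            integral_add (hDsqint g) ((hinner_int g).const_mul 2),
            integral_const_mul, integral_const]
          simp
          rfl
      _ ≤ om * ‖g‖ ^ 2 + 2 * ‖g‖ ^ 2 - ‖g‖ ^ 2 := by
          rw [hinner_mean g, real_inner_self_eq_norm_sq]
          linarith [hDvar g]
      _ = (1 + om) * ‖g‖ ^ 2 := by ring
  set S : ℝ := ∫ ω, ‖u ω‖ ^ 2 with hSdef
  have hSnn : 0 ≤ S := integral_nonneg (fun ω => by positivity)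
  set yp : Ω → EuclideanSpace ℝ (Fin d) := fun ω => y - η • u ω with hyp
  have hypmeas : Measurable yp := measurable_const.sub (humeas.const_smul η)
  have hint_a : Integrable (fun ω => ‖y - xstar‖ ^ 2 - 2 * η * ⟪y - xstar, u ω⟫) :=
    (integrable_const _).sub ((hinner_int _).const_mul _)
  have hint_b : Integrable (fun ω => η ^ 2 * ‖u ω‖ ^ 2) := husqint.const_mul _
  have hnid : ∀ ω, ‖yp ω - xstar‖ ^ 2
      = ‖y - xstar‖ ^ 2 - 2 * η * ⟪y - xstar, u ω⟫ + η ^ 2 * ‖u ω‖ ^ 2 := by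
    intro ω
    have hre : yp ω - xstar = (y - xstar) - η • u ω := sub_right_comm y (η • u ω) xstar
    rw [hre, norm_sub_sq_real, real_inner_smul_right, norm_smul, mul_pow,
      Real.norm_eq_abs, sq_abs]
    ring
  have hfun1 : (fun ω => ‖yp ω - xstar‖ ^ 2)
      = fun ω => ‖y - xstar‖ ^ 2 - 2 * η * ⟪y - xstar, u ω⟫ + η ^ 2 * ‖u ω‖ ^ 2 :=
    funext hnid
  have hIP : Integrable (fun ω => ‖yp ω - xstar‖ ^ 2) := by
    rw [hfun1]
    exact hint_a.add hint_b
  have hI2 : (∫ ω, ‖yp ω - xstar‖ ^ 2)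
      = ‖y - xstar‖ ^ 2 - 2 * η * ⟪y - xstar, g⟫ + η ^ 2 * S := by
    rw [hfun1, integral_add hint_a hint_b,
      integral_sub (integrable_const _) ((hinner_int _).const_mul _),
      integral_const, integral_const_mul, integral_const_mul, hinner_mean]
    simp [hSdef]
  have hgstar : gradient f xstar = 0 := gradient_min_eq_zero f xstar hmin
  have hfub : ∀ z, f z - f xstar ≤ L / 2 * ‖z - xstar‖ ^ 2 := by
    intro z
    have h5 := descent_lemma f L hdiff hlip xstar z
    rw [hgstar] at h5
    simp only [inner_zero_left, add_zero] at h5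
    linarith
  have hflb : ∀ z, 0 ≤ f z - f xstar := fun z => sub_nonneg.2 (hmin z)
  have hfmeas : Measurable (fun ω => f (yp ω) - f xstar) :=
    ((hdiff.continuous.measurable).comp hypmeas).sub measurable_const
  have hfint : Integrable (fun ω => f (yp ω) - f xstar) := by
    apply Integrable.mono' (hIP.const_mul (L / 2)) hfmeas.aestronglyMeasurable
    apply Filter.Eventually.of_forall
    intro ω
    rw [Real.norm_eq_abs, abs_of_nonneg (hflb _)]
    exact hfub _
  have hdesc : ∀ ω, f (yp ω) - f xstar
      ≤ (f y - f xstar) - η * ⟪g, u ω⟫ + L / 2 * η ^ 2 * ‖u ω‖ ^ 2 := by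
    intro ω
    have h6 := descent_lemma f L hdiff hlip y (yp ω)
    have hsub : yp ω - y = -(η • u ω) := by simp [hyp]
    rw [hsub, inner_neg_right, real_inner_smul_right, norm_neg, norm_smul, mul_pow,
      Real.norm_eq_abs, sq_abs] at h6
    linarith
  have hint_c : Integrable (fun ω => (f y - f xstar) - η * ⟪g, u ω⟫) :=
    (integrable_const _).sub ((hinner_int _).const_mul _)
  have hint_d : Integrable (fun ω => L / 2 * η ^ 2 * ‖u ω‖ ^ 2) := husqint.const_mul _
  have hRHSint : Integrable (fun ω =>
      (f y - f xstar) - η * ⟪g, u ω⟫ + L / 2 * η ^ 2 * ‖u ω‖ ^ 2) :=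
    hint_c.add hint_d
  set G : ℝ := ‖g‖ ^ 2 with hGdef
  have hGnn : 0 ≤ G := by positivity
  have hI1 : (∫ ω, (f (yp ω) - f xstar)) ≤ (f y - f xstar) - η * G + L / 2 * η ^ 2 * S := by
    have h1 := integral_mono hfint hRHSint (fun ω => hdesc ω)
    have h2 : (∫ ω, ((f y - f xstar) - η * ⟪g, u ω⟫ + L / 2 * η ^ 2 * ‖u ω‖ ^ 2))
        = (f y - f xstar) - η * G + L / 2 * η ^ 2 * S := by
      rw [integral_add hint_c hint_d,
        integral_sub (integrable_const _) ((hinner_int _).const_mul _),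
        integral_const, integral_const_mul, integral_const_mul, hinner_mean,
        real_inner_self_eq_norm_sq]
      simp [hSdef, hGdef]
    rw [h2] at h1
    exact h1
  have hPd : f y - f xstar ≤ ⟪y - xstar, g⟫ := by
    have h7 := convex_grad_ineq f hconv hdiff y xstar
    have hsym : ⟪g, xstar - y⟫ = -⟪y - xstar, g⟫ := by
      rw [real_inner_comm, ← inner_neg_left]
      congr 1
      abel
    rw [hsym] at h7
    linarith
  have hVint : Integrable (fun ω => ‖yp ω - xstar‖ ^ 2
      + 2 * η * (1 + om) * (f (yp ω) - f xstar)) :=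
    hIP.add (hfint.const_mul _)
  have hVval : (∫ ω, (‖yp ω - xstar‖ ^ 2 + 2 * η * (1 + om) * (f (yp ω) - f xstar)))
      = (∫ ω, ‖yp ω - xstar‖ ^ 2) + 2 * η * (1 + om) * (∫ ω, (f (yp ω) - f xstar)) := by
    rw [integral_add hIP (hfint.const_mul _), integral_const_mul]
  have hB : (∫ ω, (‖yp ω - xstar‖ ^ 2 + 2 * η * (1 + om) * (f (yp ω) - f xstar)))
      ≤ (‖y - xstar‖ ^ 2 + 2 * η * (1 + om) * (f y - f xstar)) - 2 * η * (f y - f xstar) := by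
    rw [hVval, hI2]
    have c0 := mul_le_mul_of_nonneg_left hI1 (a := 2 * η * (1 + om)) (by positivity)
    have e2 : 2 * η * (1 + om) * ((f y - f xstar) - η * G + L / 2 * η ^ 2 * S)
        = 2 * η * (1 + om) * (f y - f xstar) - 2 * η ^ 2 * (1 + om) * G + η ^ 2 * S := by
      linear_combination (η ^ 2 * S) * hηL
    rw [e2] at c0
    have c2 : 2 * η ^ 2 * S ≤ 2 * η ^ 2 * ((1 + om) * G) :=
      mul_le_mul_of_nonneg_left hS (by positivity)
    have c3 : 2 * η * (f y - f xstar) ≤ 2 * η * ⟪y - xstar, g⟫ :=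
      mul_le_mul_of_nonneg_left hPd (by positivity)
    linarith [c0, c2, c3]
  have hC : (∫ ω, (f (yp ω) - f xstar)) ≤ f y - f xstar := by
    have c4 : L / 2 * η ^ 2 * S ≤ L / 2 * η ^ 2 * ((1 + om) * G) :=
      mul_le_mul_of_nonneg_left hS (by positivity)
    have e3 : L / 2 * η ^ 2 * ((1 + om) * G) = η / 2 * G := by
      linear_combination (η * G / 2) * hηL
    have c5 : 0 ≤ η / 2 * G := by positivity
    linarith [hI1, c4, e3, c5]
  exact ⟨hVint, hB, hC⟩



section mainpart
variable {d : ℕ}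

local notation "⟪" x ", " y "⟫" => inner (𝕜 := ℝ) x y

lemma cgd_step
    (f : EuclideanSpace ℝ (Fin d) → ℝ) (L : ℝ) (hL : 0 < L)
    (hconv : ConvexOn ℝ Set.univ f)
    (hdiff : Differentiable ℝ f)
    (hlip : ∀ x y, ‖gradient f x - gradient f y‖ ≤ L * ‖x - y‖)
    (xstar : EuclideanSpace ℝ (Fin d)) (hmin : ∀ x, f xstar ≤ f x)
    (om : ℝ) (hom : 0 ≤ om)
    {Ω : Type*} [MeasureSpace Ω] [IsProbabilityMeasure (volume : Measure Ω)]
    (C : ℕ → Ω → EuclideanSpace ℝ (Fin d) → EuclideanSpace ℝ (Fin d))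
    (hCmeas : ∀ k, Measurable fun q : Ω × EuclideanSpace ℝ (Fin d) => C k q.1 q.2)
    (hCint : ∀ k v, Integrable (fun ω => C k ω v))
    (hCmean : ∀ k v, (∫ ω, C k ω v) = v)
    (hCsqint : ∀ k v, Integrable (fun ω => ‖C k ω v - v‖ ^ 2))
    (hCvar : ∀ k v, (∫ ω, ‖C k ω v - v‖ ^ 2) ≤ om * ‖v‖ ^ 2)
    (η : ℝ) (hη : η = 1 / ((1 + om) * L))
    (x : (k : ℕ) → (Fin k → Ω) → EuclideanSpace ℝ (Fin d))
    (hxrec : ∀ k (w : Fin (k + 1) → Ω),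
      x (k + 1) w = x k (fun i => w i.castSucc)
        - η • C k (w (Fin.last k)) (gradient f (x k (fun i => w i.castSucc))))
    (n : ℕ) (hxm : Measurable (x n)) (hxm1 : Measurable (x (n + 1)))
    (hIVn : Integrable (fun w : Fin n → Ω =>
      ‖x n w - xstar‖ ^ 2 + 2 * η * (1 + om) * (f (x n w) - f xstar))) :
    Integrable (fun w : Fin (n + 1) → Ω =>
      ‖x (n + 1) w - xstar‖ ^ 2 + 2 * η * (1 + om) * (f (x (n + 1) w) - f xstar))
    ∧ (∫ w : Fin (n + 1) → Ω,
        (‖x (n + 1) w - xstar‖ ^ 2 + 2 * η * (1 + om) * (f (x (n + 1) w) - f xstar)))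
      ≤ (∫ w : Fin n → Ω,
          (‖x n w - xstar‖ ^ 2 + 2 * η * (1 + om) * (f (x n w) - f xstar)))
        - 2 * η * (∫ w : Fin n → Ω, (f (x n w) - f xstar))
    ∧ (∫ w : Fin (n + 1) → Ω, (f (x (n + 1) w) - f xstar))
      ≤ ∫ w : Fin n → Ω, (f (x n w) - f xstar) := by
  have homL : 0 < (1 + om) * L := by positivity
  have hηpos : 0 < η := by rw [hη]; positivity
  have hflb : ∀ z, 0 ≤ f z - f xstar := fun z => sub_nonneg.2 (hmin z)
  -- the equivalence
  set e := MeasurableEquiv.piFinSuccAbove (fun _ : Fin (n + 1) => Ω) (Fin.last n) with he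
  have hmp : MeasurePreserving (⇑e.symm)
      ((volume : Measure Ω).prod (volume : Measure (Fin n → Ω)))
      (volume : Measure (Fin (n + 1) → Ω)) :=
    (volume_preserving_piFinSuccAbove (fun _ : Fin (n + 1) => Ω) (Fin.last n)).symm e
  have hsymm_ev : ∀ (ω : Ω) (w' : Fin n → Ω),
      x (n + 1) (e.symm (ω, w')) = x n w' - η • C n ω (gradient f (x n w')) := by
    intro ω w'
    rw [hxrec]
    have h2 : (e.symm (ω, w')) (Fin.last n) = ω := by
      simp [he, MeasurableEquiv.piFinSuccAbove]
    have h1 : (fun i : Fin n => (e.symm (ω, w')) i.castSucc) = w' := by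
      funext i
      have : (Fin.last n).succAbove i = i.castSucc := by
        rw [Fin.succAbove_last]
      rw [← this]
      simp [he, MeasurableEquiv.piFinSuccAbove]
    rw [h1, h2]
  -- key functions on the product space
  set FV : Ω × (Fin n → Ω) → ℝ := fun p =>
    ‖x (n + 1) (e.symm p) - xstar‖ ^ 2
      + 2 * η * (1 + om) * (f (x (n + 1) (e.symm p)) - f xstar) with hFV
  set Fd : Ω × (Fin n → Ω) → ℝ := fun p => f (x (n + 1) (e.symm p)) - f xstar with hFd
  have hFVnn : ∀ p, 0 ≤ FV p := by
    intro p
    have := hflb (x (n + 1) (e.symm p))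
    positivity
  have hFdnn : ∀ p, 0 ≤ Fd p := fun p => hflb _
  have hFdleFV : ∀ p, Fd p ≤ (2 * η * (1 + om))⁻¹ * FV p := by
    intro p
    rw [hFV]
    have h1 : 0 ≤ ‖x (n + 1) (e.symm p) - xstar‖ ^ 2 := by positivity
    have h2 : 0 < 2 * η * (1 + om) := by positivity
    rw [hFd]
    simp only []
    rw [mul_add, inv_mul_cancel_left₀ (ne_of_gt h2)]
    have h3 : 0 ≤ (2 * η * (1 + om))⁻¹ * ‖x (n + 1) (e.symm p) - xstar‖ ^ 2 := by positivity
    linarith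
  -- measurability
  have hFVmeas : Measurable FV := by
    have hcomp : Measurable fun p : Ω × (Fin n → Ω) => x (n + 1) (e.symm p) :=
      hxm1.comp e.symm.measurable
    exact ((hcomp.sub measurable_const).norm.pow_const 2).add
      (((hdiff.continuous.measurable.comp hcomp).sub measurable_const).const_mul _)
  have hFdmeas : Measurable Fd := by
    have hcomp : Measurable fun p : Ω × (Fin n → Ω) => x (n + 1) (e.symm p) :=
      hxm1.comp e.symm.measurable
    exact (hdiff.continuous.measurable.comp hcomp).sub measurable_const
  -- the one step facts, for each fixed prefix
  have hstep := fun (w' : Fin n → Ω) =>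
    onestep f L hL hconv hdiff hlip xstar hmin om hom (C n) (hCmeas n) (hCint n)
      (hCmean n) (hCsqint n) (hCvar n) η hη (x n w')
  have hFVslice : ∀ w' : Fin n → Ω, (fun ω => FV (ω, w'))
      = fun ω => ‖(x n w' - η • C n ω (gradient f (x n w'))) - xstar‖ ^ 2
        + 2 * η * (1 + om) * (f (x n w' - η • C n ω (gradient f (x n w'))) - f xstar) := by
    intro w'
    funext ω
    rw [hFV]
    simp only [hsymm_ev ω w']
  have hslice_int : ∀ w' : Fin n → Ω, Integrable (fun ω => FV (ω, w')) := by
    intro w'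
    rw [hFVslice w']
    exact (hstep w').1
  have hslice_bound : ∀ w' : Fin n → Ω, (∫ ω, FV (ω, w'))
      ≤ (‖x n w' - xstar‖ ^ 2 + 2 * η * (1 + om) * (f (x n w') - f xstar))
        - 2 * η * (f (x n w') - f xstar) := by
    intro w'
    rw [hFVslice w']
    exact (hstep w').2.1
  have hslice_nn : ∀ w' : Fin n → Ω, 0 ≤ ∫ ω, FV (ω, w') :=
    fun w' => integral_nonneg fun ω => hFVnn _
  -- integrability over the product
  have hmeasInt : AEStronglyMeasurable (fun w' : Fin n → Ω => ∫ ω, FV (ω, w'))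
      (volume : Measure (Fin n → Ω)) :=
    (hFVmeas.stronglyMeasurable.integral_prod_left').aestronglyMeasurable
  have hFVprod : Integrable FV
      ((volume : Measure Ω).prod (volume : Measure (Fin n → Ω))) := by
    rw [integrable_prod_iff' hFVmeas.aestronglyMeasurable]
    constructor
    · exact Filter.Eventually.of_forall hslice_int
    · have hnormeq : (fun w' : Fin n → Ω => ∫ ω, ‖FV (ω, w')‖)
          = fun w' => ∫ ω, FV (ω, w') := by
        funext w'
        congr 1
        funext ω
        exact Real.norm_of_nonneg (hFVnn _)
      rw [hnormeq]
      apply Integrable.mono' hIVn hmeasInt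
      apply Filter.Eventually.of_forall
      intro w'
      rw [Real.norm_of_nonneg (hslice_nn w')]
      have h4 := hslice_bound w'
      have h5 : 0 ≤ 2 * η * (f (x n w') - f xstar) := by
        have := hflb (x n w'); positivity
      linarith
  have hFdprod : Integrable Fd
      ((volume : Measure Ω).prod (volume : Measure (Fin n → Ω))) := by
    apply Integrable.mono' (hFVprod.const_mul (2 * η * (1 + om))⁻¹)
      hFdmeas.aestronglyMeasurable
    apply Filter.Eventually.of_forall
    intro p
    rw [Real.norm_of_nonneg (hFdnn p)]
    exact hFdleFV p
  -- transfer integrability along e.symm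
  have hVcompeq : (fun w : Fin (n + 1) → Ω =>
      ‖x (n + 1) w - xstar‖ ^ 2 + 2 * η * (1 + om) * (f (x (n + 1) w) - f xstar)) ∘ ⇑e.symm
      = FV := rfl
  have hIVn1 : Integrable (fun w : Fin (n + 1) → Ω =>
      ‖x (n + 1) w - xstar‖ ^ 2 + 2 * η * (1 + om) * (f (x (n + 1) w) - f xstar)) := by
    rw [← hmp.integrable_comp_emb e.symm.measurableEmbedding, hVcompeq]
    exact hFVprod
  -- integral identities
  have hIVval : (∫ w : Fin (n + 1) → Ω,
      (‖x (n + 1) w - xstar‖ ^ 2 + 2 * η * (1 + om) * (f (x (n + 1) w) - f xstar)))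
      = ∫ w' : Fin n → Ω, (∫ ω, FV (ω, w')) := by
    rw [← hmp.integral_comp e.symm.measurableEmbedding]
    exact integral_prod_symm FV hFVprod
  have hIdval : (∫ w : Fin (n + 1) → Ω, (f (x (n + 1) w) - f xstar))
      = ∫ w' : Fin n → Ω, (∫ ω, Fd (ω, w')) := by
    rw [← hmp.integral_comp e.symm.measurableEmbedding]
    exact integral_prod_symm Fd hFdprod
  -- derived integrabilities at level n
  have hδmeas : Measurable (fun w : Fin n → Ω => f (x n w) - f xstar) :=
    (hdiff.continuous.measurable.comp hxm).sub measurable_const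
  have hδint : Integrable (fun w : Fin n → Ω => f (x n w) - f xstar) := by
    apply Integrable.mono' (hIVn.const_mul (2 * η * (1 + om))⁻¹) hδmeas.aestronglyMeasurable
    apply Filter.Eventually.of_forall
    intro w
    rw [Real.norm_of_nonneg (hflb _)]
    have h2 : 0 < 2 * η * (1 + om) := by positivity
    rw [mul_add, inv_mul_cancel_left₀ (ne_of_gt h2)]
    have h3 : 0 ≤ (2 * η * (1 + om))⁻¹ * ‖x n w - xstar‖ ^ 2 := by positivity
    linarith
  -- V recursion
  have hrec1 : (∫ w : Fin (n + 1) → Ω,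
      (‖x (n + 1) w - xstar‖ ^ 2 + 2 * η * (1 + om) * (f (x (n + 1) w) - f xstar)))
      ≤ (∫ w : Fin n → Ω,
          (‖x n w - xstar‖ ^ 2 + 2 * η * (1 + om) * (f (x n w) - f xstar)))
        - 2 * η * (∫ w : Fin n → Ω, (f (x n w) - f xstar)) := by
    rw [hIVval]
    have hRHSint : Integrable (fun w' : Fin n → Ω =>
        (‖x n w' - xstar‖ ^ 2 + 2 * η * (1 + om) * (f (x n w') - f xstar))
          - 2 * η * (f (x n w') - f xstar)) := hIVn.sub (hδint.const_mul _)
    have h6 := integral_mono hFVprod.integral_prod_right hRHSint hslice_bound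
    rw [integral_sub hIVn (hδint.const_mul _), integral_const_mul] at h6
    exact h6
  -- δ recursion
  have hrec2 : (∫ w : Fin (n + 1) → Ω, (f (x (n + 1) w) - f xstar))
      ≤ ∫ w : Fin n → Ω, (f (x n w) - f xstar) := by
    rw [hIdval]
    have hFdslice_bound : ∀ w' : Fin n → Ω,
        (∫ ω, Fd (ω, w')) ≤ f (x n w') - f xstar := by
      intro w'
      have heq : (fun ω => Fd (ω, w'))
          = fun ω => f (x n w' - η • C n ω (gradient f (x n w'))) - f xstar := by
        funext ω
        rw [hFd]
        simp only [hsymm_ev ω w']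
      rw [heq]
      exact (hstep w').2.2
    exact integral_mono hFdprod.integral_prod_right hδint hFdslice_bound
  exact ⟨hIVn1, hrec1, hrec2⟩

end mainpart

theorem cgd_convex_rate {d : ℕ}
    (f : EuclideanSpace ℝ (Fin d) → ℝ) (L : ℝ) (hL : 0 < L)
    (hconv : ConvexOn ℝ Set.univ f)
    (hdiff : Differentiable ℝ f)
    (hlip : ∀ x y, ‖gradient f x - gradient f y‖ ≤ L * ‖x - y‖)
    (xstar : EuclideanSpace ℝ (Fin d)) (hmin : ∀ x, f xstar ≤ f x)
    (om : ℝ) (hom : 0 ≤ om)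
    {Ω : Type*} [MeasureSpace Ω] [IsProbabilityMeasure (volume : Measure Ω)]
    (C : ℕ → Ω → EuclideanSpace ℝ (Fin d) → EuclideanSpace ℝ (Fin d))
    (hCmeas : ∀ k, Measurable fun q : Ω × EuclideanSpace ℝ (Fin d) => C k q.1 q.2)
    (hCint : ∀ k v, Integrable (fun ω => C k ω v))
    (hCmean : ∀ k v, (∫ ω, C k ω v) = v)
    (hCsqint : ∀ k v, Integrable (fun ω => ‖C k ω v - v‖ ^ 2))
    (hCvar : ∀ k v, (∫ ω, ‖C k ω v - v‖ ^ 2) ≤ om * ‖v‖ ^ 2)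
    (η : ℝ) (hη : η = 1 / ((1 + om) * L))
    (x0 : EuclideanSpace ℝ (Fin d))
    (x : (k : ℕ) → (Fin k → Ω) → EuclideanSpace ℝ (Fin d))
    (hx0 : ∀ w, x 0 w = x0)
    (hxrec : ∀ k (w : Fin (k + 1) → Ω),
      x (k + 1) w = x k (fun i => w i.castSucc)
        - η • C k (w (Fin.last k)) (gradient f (x k (fun i => w i.castSucc))))
    (k : ℕ) (hk : 1 ≤ k) :
    (∫ w : Fin k → Ω, f (x k w)) - f xstar
        ≤ (1 + om) * L * ‖x0 - xstar‖ ^ 2 / k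
      ∧ ∀ ε : ℝ, 0 < ε → (1 + om) * L * ‖x0 - xstar‖ ^ 2 / ε ≤ (k : ℝ) →
          (∫ w : Fin k → Ω, f (x k w)) - f xstar ≤ ε := by
  have homL : 0 < (1 + om) * L := by positivity
  have hηpos : 0 < η := by rw [hη]; positivity
  have hηL : (1 + om) * L * η = 1 := by rw [hη]; field_simp
  have hflb : ∀ z, 0 ≤ f z - f xstar := fun z => sub_nonneg.2 (hmin z)
  have hgstar : gradient f xstar = 0 := gradient_min_eq_zero f xstar hmin
  have hfub : ∀ z, f z - f xstar ≤ L / 2 * ‖z - xstar‖ ^ 2 := by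
    intro z
    have h5 := descent_lemma f L hdiff hlip xstar z
    rw [hgstar] at h5
    simp only [inner_zero_left, add_zero] at h5
    linarith
  -- continuity of the gradient
  have hgradcont : Continuous (gradient f) := by
    have : LipschitzWith (Real.toNNReal L) (gradient f) := by
      apply LipschitzWith.of_dist_le_mul
      intro a b
      rw [dist_eq_norm, dist_eq_norm]
      calc ‖gradient f a - gradient f b‖ ≤ L * ‖a - b‖ := hlip a b
        _ ≤ Real.toNNReal L * ‖a - b‖ := by
            apply mul_le_mul_of_nonneg_right _ (norm_nonneg _)
            exact le_max_left _ _
    exact this.continuous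
  -- measurability of all iterates
  have hxmeas : ∀ n, Measurable (x n) := by
    intro n
    induction n with
    | zero =>
      have hx0' : x 0 = fun _ => x0 := funext hx0
      rw [hx0']
      exact measurable_const
    | succ n ih =>
      have hpre : Measurable (fun w : Fin (n + 1) → Ω => (fun i : Fin n => w i.castSucc)) :=
        measurable_pi_lambda _ fun i => measurable_pi_apply _
      have h1 : Measurable fun w : Fin (n + 1) → Ω => x n (fun i => w i.castSucc) :=
        ih.comp hpre
      have h2 : Measurable fun w : Fin (n + 1) → Ω =>
          C n (w (Fin.last n)) (gradient f (x n (fun i => w i.castSucc))) :=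
        (hCmeas n).comp ((measurable_pi_apply _).prodMk ((hgradcont.measurable).comp h1))
      have hx1 : x (n + 1) = fun w : Fin (n + 1) → Ω =>
          x n (fun i => w i.castSucc)
            - η • C n (w (Fin.last n)) (gradient f (x n (fun i => w i.castSucc))) :=
        funext (hxrec n)
      rw [hx1]
      exact h1.sub (h2.const_smul η)
  -- probability measures on the path spaces
  haveI hprob : ∀ n : ℕ, IsProbabilityMeasure (volume : Measure (Fin n → Ω)) := fun n =>
    inferInstanceAs (IsProbabilityMeasure (Measure.pi fun _ : Fin n => (volume : Measure Ω)))
  -- integrability of the Lyapunov quantity, by induction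
  have hIV : ∀ n, Integrable (fun w : Fin n → Ω =>
      ‖x n w - xstar‖ ^ 2 + 2 * η * (1 + om) * (f (x n w) - f xstar)) := by
    intro n
    induction n with
    | zero =>
      have hx0' : (fun w : Fin 0 → Ω =>
          ‖x 0 w - xstar‖ ^ 2 + 2 * η * (1 + om) * (f (x 0 w) - f xstar))
          = fun _ => ‖x0 - xstar‖ ^ 2 + 2 * η * (1 + om) * (f x0 - f xstar) := by
        funext w
        rw [hx0]
      rw [hx0']
      exact integrable_const _
    | succ n ih =>
      exact (cgd_step f L hL hconv hdiff hlip xstar hmin om hom C hCmeas hCint hCmean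
        hCsqint hCvar η hη x hxrec n (hxmeas n) (hxmeas (n + 1)) ih).1
  -- the two recursions
  set Vn : ℕ → ℝ := fun n => ∫ w : Fin n → Ω,
    (‖x n w - xstar‖ ^ 2 + 2 * η * (1 + om) * (f (x n w) - f xstar)) with hVn
  set Dn : ℕ → ℝ := fun n => ∫ w : Fin n → Ω, (f (x n w) - f xstar) with hDn
  have hrec1 : ∀ n, Vn (n + 1) ≤ Vn n - 2 * η * Dn n := fun n =>
    (cgd_step f L hL hconv hdiff hlip xstar hmin om hom C hCmeas hCint hCmean
      hCsqint hCvar η hη x hxrec n (hxmeas n) (hxmeas (n + 1)) (hIV n)).2.1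
  have hrec2 : ∀ n, Dn (n + 1) ≤ Dn n := fun n =>
    (cgd_step f L hL hconv hdiff hlip xstar hmin om hom C hCmeas hCint hCmean
      hCsqint hCvar η hη x hxrec n (hxmeas n) (hxmeas (n + 1)) (hIV n)).2.2
  have hDnn : ∀ n, 0 ≤ Dn n := fun n => integral_nonneg fun w => hflb _
  have hVnn : ∀ n, 0 ≤ Vn n := by
    intro n
    apply integral_nonneg
    intro w
    have := hflb (x n w)
    positivity
  -- telescoping
  have hsum : ∀ n : ℕ, 2 * η * n * Dn n ≤ Vn 0 - Vn n := by
    intro n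
    induction n with
    | zero => simp
    | succ n ih =>
      have c1 : 2 * η * n * Dn (n + 1) ≤ 2 * η * n * Dn n :=
        mul_le_mul_of_nonneg_left (hrec2 n) (by positivity)
      have c2 : 2 * η * Dn (n + 1) ≤ 2 * η * Dn n :=
        mul_le_mul_of_nonneg_left (hrec2 n) (by positivity)
      have hcast : ((n : ℝ) + 1) = ((n + 1 : ℕ) : ℝ) := by push_cast; ring
      have hexp : 2 * η * ((n + 1 : ℕ) : ℝ) * Dn (n + 1)
          = 2 * η * n * Dn (n + 1) + 2 * η * Dn (n + 1) := by
        rw [← hcast]; ring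
      rw [hexp]
      linarith [hrec1 n, ih, c1, c2]
  -- value at 0
  have hV0 : Vn 0 ≤ 2 * ‖x0 - xstar‖ ^ 2 := by
    have hx0' : (fun w : Fin 0 → Ω =>
        ‖x 0 w - xstar‖ ^ 2 + 2 * η * (1 + om) * (f (x 0 w) - f xstar))
        = fun _ => ‖x0 - xstar‖ ^ 2 + 2 * η * (1 + om) * (f x0 - f xstar) := by
      funext w
      rw [hx0]
    have : Vn 0 = ‖x0 - xstar‖ ^ 2 + 2 * η * (1 + om) * (f x0 - f xstar) := by
      rw [hVn]
      simp only [hx0']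
      rw [integral_const]
      simp
    rw [this]
    have h1 : 2 * η * (1 + om) * (f x0 - f xstar)
        ≤ 2 * η * (1 + om) * (L / 2 * ‖x0 - xstar‖ ^ 2) :=
      mul_le_mul_of_nonneg_left (hfub x0) (by positivity)
    have h2 : 2 * η * (1 + om) * (L / 2 * ‖x0 - xstar‖ ^ 2) = ‖x0 - xstar‖ ^ 2 := by
      linear_combination (‖x0 - xstar‖ ^ 2) * hηL
    linarith
  -- main bound on Dn k
  have hkpos : (0 : ℝ) < (k : ℝ) := by
    have : (0 : ℕ) < k := lt_of_lt_of_le zero_lt_one hk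
    exact_mod_cast this
  have hDk : Dn k ≤ (1 + om) * L * ‖x0 - xstar‖ ^ 2 / k := by
    rw [le_div_iff₀ hkpos]
    have h1 : 2 * η * (k : ℝ) * Dn k ≤ 2 * ‖x0 - xstar‖ ^ 2 := by
      have := hsum k
      linarith [hVnn k, hV0]
    have h2 := mul_le_mul_of_nonneg_left h1 (le_of_lt homL)
    have e4 : (1 + om) * L * (2 * η * (k : ℝ) * Dn k) = 2 * ((k : ℝ) * Dn k) := by
      linear_combination (2 * (k : ℝ) * Dn k) * hηL
    rw [e4] at h2
    have : (k : ℝ) * Dn k ≤ (1 + om) * L * ‖x0 - xstar‖ ^ 2 := by linarith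
    linarith [this]
  -- identify Dn k with the goal quantity
  have hδmeas : Measurable (fun w : Fin k → Ω => f (x k w) - f xstar) :=
    (hdiff.continuous.measurable.comp (hxmeas k)).sub measurable_const
  have hδint : Integrable (fun w : Fin k → Ω => f (x k w) - f xstar) := by
    apply Integrable.mono' ((hIV k).const_mul (2 * η * (1 + om))⁻¹) hδmeas.aestronglyMeasurable
    apply Filter.Eventually.of_forall
    intro w
    rw [Real.norm_of_nonneg (hflb _)]
    have h2 : 0 < 2 * η * (1 + om) := by positivity
    rw [mul_add, inv_mul_cancel_left₀ (ne_of_gt h2)]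
    have h3 : 0 ≤ (2 * η * (1 + om))⁻¹ * ‖x k w - xstar‖ ^ 2 := by positivity
    linarith
  have hfi : Integrable (fun w : Fin k → Ω => f (x k w)) := by
    have heq : (fun w : Fin k → Ω => f (x k w))
        = fun w => (f (x k w) - f xstar) + f xstar := by
      funext w; ring
    rw [heq]
    exact hδint.add (integrable_const _)
  have hgoalId : (∫ w : Fin k → Ω, f (x k w)) - f xstar = Dn k := by
    show _ = ∫ w : Fin k → Ω, (f (x k w) - f xstar)
    rw [integral_sub hfi (integrable_const _), integral_const]
    simp
  constructor
  · rw [hgoalId]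
    exact hDk
  · intro ε hε hcond
    rw [hgoalId]
    have hAnn : 0 ≤ (1 + om) * L * ‖x0 - xstar‖ ^ 2 := by positivity
    have h6 : (1 + om) * L * ‖x0 - xstar‖ ^ 2 ≤ (k : ℝ) * ε := (div_le_iff₀ hε).1 hcond
    have h7 : (1 + om) * L * ‖x0 - xstar‖ ^ 2 / k ≤ ε := by
      rw [div_le_iff₀ hkpos]
      linarith
    linarith [hDk, h7]
end

section
/- Let f_1, …, f_n : ℝ^d → ℝ be differentiable and f = (1/n)∑_{i=1}^n f_i. Let x^k, w^k ∈ ℝ^d and h_1, …, h_n ∈ ℝ^d, set h = (1/n)∑_{i=1}^n h_i, and let C_1, …, C_n be independent ω-compression operators. Define g^k = (1/n)∑_{i=1}^n C_i(∇f_i(x^k) − h_i) + h. Then E[‖g^k − ∇f(x^k)‖²] ≤ (2ω/n²) ∑_{i=1}^n ‖∇f_i(w^k) − ∇f_i(x^k)‖² + (2ω/n) · (1/n)∑_{i=1}^n ‖h_i − ∇f_i(w^k)‖². -/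
open MeasureTheory



lemma coord_sq_le {d : ℕ} (x : EuclideanSpace ℝ (Fin d)) (k : Fin d) :
    (x k) ^ 2 ≤ ‖x‖ ^ 2 := by
  rw [EuclideanSpace.norm_eq, Real.sq_sqrt (by positivity)]
  have := Finset.single_le_sum (f := fun j => ‖x j‖ ^ 2)
    (fun j _ => by positivity) (Finset.mem_univ k)
  simpa [Real.norm_eq_abs, sq_abs] using this

lemma coord_int {d : ℕ} {Ω : Type*} [MeasureSpace Ω]
    {X : Ω → EuclideanSpace ℝ (Fin d)} (hX : Integrable X) (k : Fin d) :
    Integrable (fun ω => X ω k) :=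
  (EuclideanSpace.proj k : EuclideanSpace ℝ (Fin d) →L[ℝ] ℝ).integrable_comp hX

lemma coord_integral {d : ℕ} {Ω : Type*} [MeasureSpace Ω]
    {X : Ω → EuclideanSpace ℝ (Fin d)} (hX : Integrable X) (k : Fin d) :
    (∫ ω, X ω k) = (∫ ω, X ω) k :=
  ((EuclideanSpace.proj k : EuclideanSpace ℝ (Fin d) →L[ℝ] ℝ).integral_comp_comm hX)

lemma coord_mul_int {d : ℕ} {Ω : Type*} [MeasureSpace Ω]
    {X Y : Ω → EuclideanSpace ℝ (Fin d)}
    (hX : Integrable X) (hY : Integrable Y)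
    (hX2 : Integrable (fun ω => ‖X ω‖ ^ 2)) (hY2 : Integrable (fun ω => ‖Y ω‖ ^ 2))
    (k : Fin d) :
    Integrable (fun ω => X ω k * Y ω k) := by
  refine Integrable.mono' (hX2.add hY2) ((coord_int hX k).aestronglyMeasurable.mul
    (coord_int hY k).aestronglyMeasurable) ?_
  filter_upwards with ω
  have h1 := coord_sq_le (X ω) k
  have h2 := coord_sq_le (Y ω) k
  rw [Real.norm_eq_abs, Pi.add_apply]
  rcases abs_cases (X ω k * Y ω k) with ⟨he, _⟩ | ⟨he, _⟩ <;>
    nlinarith [sq_nonneg (X ω k - Y ω k), sq_nonneg (X ω k + Y ω k)]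

lemma norm_sq_expand {d : ℕ} (x : EuclideanSpace ℝ (Fin d)) :
    ‖x‖ ^ 2 = ∑ k, x k * x k := by
  rw [EuclideanSpace.norm_eq, Real.sq_sqrt (by positivity)]
  simp [Real.norm_eq_abs, sq_abs, sq]

lemma indep_sum_sq {d n : ℕ} {Ω : Type*} [MeasureSpace Ω]
    [IsProbabilityMeasure (volume : Measure Ω)]
    (X : Fin n → Ω → EuclideanSpace ℝ (Fin d))
    (hX : ∀ i, Integrable (X i))
    (h0 : ∀ i, (∫ ω, X i ω) = 0)
    (hsq : ∀ i, Integrable (fun ω => ‖X i ω‖ ^ 2)) :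
    (∫ w : Fin n → Ω, ‖∑ i, X i (w i)‖ ^ 2) = ∑ i, ∫ ω, ‖X i ω‖ ^ 2 := by
  classical
  set F : Fin n → Fin n → Fin d → Fin n → Ω → ℝ :=
    fun i j k m ω => (if m = i then X i ω k else 1) * (if m = j then X j ω k else 1) with hF
  have hFint : ∀ i j k m, Integrable (F i j k m) := by
    intro i j k m
    simp only [hF]
    split_ifs with h1 h2 h2
    · subst h1 h2; exact coord_mul_int (hX m) (hX m) (hsq m) (hsq m) k
    · subst h1; simpa using coord_int (hX m) k
    · subst h2; simpa using coord_int (hX m) k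
    · simpa using integrable_const (1 : ℝ)
  have hprod : ∀ i j k (w : Fin n → Ω),
      (∏ m, F i j k m (w m)) = X i (w i) k * X j (w j) k := by
    intro i j k w
    simp only [hF, Finset.prod_mul_distrib]
    rw [Finset.prod_ite_eq' Finset.univ i (fun m => X i (w m) k),
      Finset.prod_ite_eq' Finset.univ j (fun m => X j (w m) k)]
    simp
  have hTint : ∀ i j k, Integrable (fun w : Fin n → Ω => X i (w i) k * X j (w j) k) := by
    intro i j k
    exact (Integrable.fintype_prod (f := F i j k) (fun m => hFint i j k m)).congr
      (Filter.Eventually.of_forall fun w => hprod i j k w)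
  have hTprod : ∀ i j k, (∫ w : Fin n → Ω, X i (w i) k * X j (w j) k)
      = ∏ m, ∫ ω, F i j k m ω := by
    intro i j k
    rw [← MeasureTheory.integral_fintype_prod_eq_prod (F i j k)]
    exact integral_congr_ae (Filter.Eventually.of_forall fun w => (hprod i j k w).symm)
  have hTval : ∀ i j k, i ≠ j →
      (∫ w : Fin n → Ω, X i (w i) k * X j (w j) k) = 0 := by
    intro i j k hij
    rw [hTprod i j k]
    refine Finset.prod_eq_zero (Finset.mem_univ i) ?_
    have : (fun ω => F i j k i ω) = fun ω => X i ω k := by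
      funext ω; simp [hF, hij]
    rw [this, coord_integral (hX i) k, h0 i]
    simp
  have hTdiag : ∀ i k, (∫ w : Fin n → Ω, X i (w i) k * X i (w i) k)
      = ∫ ω, X i ω k * X i ω k := by
    intro i k
    rw [hTprod i i k]
    refine Finset.prod_eq_single_of_mem i (Finset.mem_univ i) ?_ |>.trans ?_
    · intro m _ hmi
      have : (fun ω => F i i k m ω) = fun _ => (1 : ℝ) := by
        funext ω; simp [hF, hmi]
      rw [this]; simp
    · congr 1; funext ω; simp [hF]
  calc (∫ w : Fin n → Ω, ‖∑ i, X i (w i)‖ ^ 2)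
      = ∫ w : Fin n → Ω, ∑ k, ∑ i, ∑ j, X i (w i) k * X j (w j) k := by
        refine integral_congr_ae (Filter.Eventually.of_forall fun w => ?_)
        dsimp only
        rw [norm_sq_expand]
        congr 1; funext k
        rw [show (∑ i, X i (w i)) k = ∑ i, X i (w i) k from by
          rw [WithLp.ofLp_sum]; exact Finset.sum_apply k Finset.univ fun i => (X i (w i)).ofLp]
        rw [Finset.sum_mul_sum]
    _ = ∑ k, ∑ i, ∑ j, ∫ w : Fin n → Ω, X i (w i) k * X j (w j) k := by
        rw [integral_finset_sum _ (fun k _ => integrable_finset_sum _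
          (fun i _ => integrable_finset_sum _ (fun j _ => hTint i j k)))]
        congr 1; funext k
        rw [integral_finset_sum _ (fun i _ => integrable_finset_sum _
          (fun j _ => hTint i j k))]
        congr 1; funext i
        rw [integral_finset_sum _ (fun j _ => hTint i j k)]
    _ = ∑ k, ∑ i, ∫ ω, X i ω k * X i ω k := by
        congr 1; funext k; congr 1; funext i
        rw [Finset.sum_eq_single_of_mem i (Finset.mem_univ i)
          (fun j _ hji => hTval i j k (fun hij => hji hij.symm))]
        exact hTdiag i k
    _ = ∑ i, ∫ ω, ‖X i ω‖ ^ 2 := by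
        rw [Finset.sum_comm]
        congr 1; funext i
        rw [← integral_finset_sum _ (fun k _ =>
          coord_mul_int (hX i) (hX i) (hsq i) (hsq i) k)]
        exact integral_congr_ae (Filter.Eventually.of_forall fun ω =>
          by dsimp only; rw [norm_sq_expand])

lemma grad_avg {d n : ℕ} (fi : Fin n → EuclideanSpace ℝ (Fin d) → ℝ)
    (hdiff : ∀ i, Differentiable ℝ (fi i))
    (f : EuclideanSpace ℝ (Fin d) → ℝ)
    (hf : ∀ x, f x = (1 / (n : ℝ)) * ∑ i, fi i x)
    (xk : EuclideanSpace ℝ (Fin d)) :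
    gradient f xk = (1 / (n : ℝ)) • ∑ i, gradient (fi i) xk := by
  have hfe : f = fun x => (1/(n:ℝ)) * ∑ i, fi i x := funext hf
  have hd : HasFDerivAt f ((1/(n:ℝ)) • ∑ i, fderiv ℝ (fi i) xk) xk := by
    rw [hfe]
    exact (HasFDerivAt.fun_sum (fun i _ => ((hdiff i) xk).hasFDerivAt)).const_mul _
  rw [hd.hasGradientAt.gradient]
  simp only [_root_.map_smul, map_sum, gradient]

theorem adiana_variance_bound {d n : ℕ} (hn : 0 < n)
    (fi : Fin n → EuclideanSpace ℝ (Fin d) → ℝ)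
    (hdiff : ∀ i, Differentiable ℝ (fi i))
    (f : EuclideanSpace ℝ (Fin d) → ℝ)
    (hf : ∀ x, f x = (1 / (n : ℝ)) * ∑ i, fi i x)
    (xk wk : EuclideanSpace ℝ (Fin d))
    (h : Fin n → EuclideanSpace ℝ (Fin d))
    (hbar : EuclideanSpace ℝ (Fin d)) (hhbar : hbar = (1 / (n : ℝ)) • ∑ i, h i)
    (om : ℝ) (hom : 0 ≤ om)
    {Ω : Type*} [MeasureSpace Ω] [IsProbabilityMeasure (volume : Measure Ω)]
    (C : Fin n → Ω → EuclideanSpace ℝ (Fin d) → EuclideanSpace ℝ (Fin d))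
    (hCint : ∀ i v, Integrable (fun ω => C i ω v))
    (hCmean : ∀ i v, (∫ ω, C i ω v) = v)
    (hCsqint : ∀ i v, Integrable (fun ω => ‖C i ω v - v‖ ^ 2))
    (hCvar : ∀ i v, (∫ ω, ‖C i ω v - v‖ ^ 2) ≤ om * ‖v‖ ^ 2)
    (g : (Fin n → Ω) → EuclideanSpace ℝ (Fin d))
    (hg : ∀ w, g w
      = (1 / (n : ℝ)) • ∑ i, C i (w i) (gradient (fi i) xk - h i) + hbar) :
    (∫ w : Fin n → Ω, ‖g w - gradient f xk‖ ^ 2)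
      ≤ 2 * om / (n : ℝ) ^ 2 * ∑ i, ‖gradient (fi i) wk - gradient (fi i) xk‖ ^ 2
        + 2 * om / (n : ℝ)
          * ((1 / (n : ℝ)) * ∑ i, ‖h i - gradient (fi i) wk‖ ^ 2) := by
  classical
  have hn' : (n : ℝ) ≠ 0 := Nat.cast_ne_zero.mpr hn.ne'
  set v : Fin n → EuclideanSpace ℝ (Fin d) := fun i => gradient (fi i) xk - h i with hv
  set X : Fin n → Ω → EuclideanSpace ℝ (Fin d) := fun i ω => C i ω (v i) - v i with hXdef
  have hX : ∀ i, Integrable (X i) := fun i => (hCint i (v i)).sub (integrable_const _)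
  have h0 : ∀ i, (∫ ω, X i ω) = 0 := by
    intro i
    rw [hXdef]
    rw [integral_sub (hCint i (v i)) (integrable_const _), hCmean i (v i), integral_const]
    simp
  have hsq : ∀ i, Integrable (fun ω => ‖X i ω‖ ^ 2) := fun i => hCsqint i (v i)
  have hgrad : gradient f xk = (1 / (n : ℝ)) • ∑ i, gradient (fi i) xk :=
    grad_avg fi hdiff f hf xk
  have hrepr : ∀ w : Fin n → Ω, g w - gradient f xk = (1 / (n : ℝ)) • ∑ i, X i (w i) := by
    intro w
    rw [hg, hgrad, hhbar, hXdef]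
    simp only [hv]
    rw [Finset.sum_sub_distrib, Finset.sum_sub_distrib]
    module
  have hvb : ∀ i, ‖v i‖ ^ 2 ≤ 2 * ‖gradient (fi i) wk - gradient (fi i) xk‖ ^ 2
      + 2 * ‖h i - gradient (fi i) wk‖ ^ 2 := by
    intro i
    have hvi : v i = -((gradient (fi i) wk - gradient (fi i) xk)
        + (h i - gradient (fi i) wk)) := by
      rw [hv]; module
    rw [hvi, norm_neg]
    have htri := norm_add_le (gradient (fi i) wk - gradient (fi i) xk)
      (h i - gradient (fi i) wk)
    have h1 := norm_nonneg (gradient (fi i) wk - gradient (fi i) xk)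
    have h2 := norm_nonneg (h i - gradient (fi i) wk)
    have h3 := norm_nonneg ((gradient (fi i) wk - gradient (fi i) xk)
        + (h i - gradient (fi i) wk))
    nlinarith [htri, h1, h2, h3, mul_self_le_mul_self h3 htri,
      sq_nonneg (‖gradient (fi i) wk - gradient (fi i) xk‖ - ‖h i - gradient (fi i) wk‖)]
  set A : Fin n → ℝ := fun i => ‖gradient (fi i) wk - gradient (fi i) xk‖ ^ 2 with hA
  set B : Fin n → ℝ := fun i => ‖h i - gradient (fi i) wk‖ ^ 2 with hB
  have hsumle : ∑ i, (∫ ω, ‖X i ω‖ ^ 2) ≤ 2 * om * ∑ i, A i + 2 * om * ∑ i, B i := by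
    calc ∑ i, (∫ ω, ‖X i ω‖ ^ 2) ≤ ∑ i, om * (2 * A i + 2 * B i) :=
          Finset.sum_le_sum fun i _ => le_trans (hCvar i (v i))
            (mul_le_mul_of_nonneg_left (hvb i) hom)
      _ = 2 * om * ∑ i, A i + 2 * om * ∑ i, B i := by
          rw [Finset.sum_congr rfl (fun i _ => by ring :
            ∀ i ∈ Finset.univ, om * (2 * A i + 2 * B i) = 2 * om * A i + 2 * om * B i),
            Finset.sum_add_distrib, ← Finset.mul_sum, ← Finset.mul_sum]
  calc (∫ w : Fin n → Ω, ‖g w - gradient f xk‖ ^ 2)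
      = ∫ w : Fin n → Ω, (1 / (n : ℝ)) ^ 2 * ‖∑ i, X i (w i)‖ ^ 2 := by
        refine integral_congr_ae (Filter.Eventually.of_forall fun w => ?_)
        dsimp only
        rw [hrepr w, norm_smul, mul_pow, Real.norm_eq_abs, sq_abs]
    _ = (1 / (n : ℝ)) ^ 2 * ∑ i, ∫ ω, ‖X i ω‖ ^ 2 := by
        rw [integral_const_mul, indep_sum_sq X hX h0 hsq]
    _ ≤ (1 / (n : ℝ)) ^ 2 * (2 * om * ∑ i, A i + 2 * om * ∑ i, B i) :=
        mul_le_mul_of_nonneg_left hsumle (by positivity)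
    _ = 2 * om / (n : ℝ) ^ 2 * ∑ i, A i
        + 2 * om / (n : ℝ) * ((1 / (n : ℝ)) * ∑ i, B i) := by
        field_simp
end

section
/- Let f_1, …, f_n : ℝ^d → ℝ be differentiable, let x^k, y^k, w^k ∈ ℝ^d and h_1^k, …, h_n^k ∈ ℝ^d, let ω ≥ 0, 0 < α ≤ 1/(1+ω), p ∈ [0,1], and let C_1, …, C_n be independent ω-compression operators, independent of a Bernoulli(p) variable defining w^{k+1} (w^{k+1} = y^k with probability p, w^{k+1} = w^k with probability 1 − p). Define h_i^{k+1} = h_i^k + α C_i(∇f_i(w^k) − h_i^k) and ℋ^k = (1/n)∑_{i=1}^n ‖h_i^k − ∇f_i(w^k)‖², ℋ^{k+1} = (1/n)∑_{i=1}^n ‖h_i^{k+1} − ∇f_i(w^{k+1})‖². Then E[ℋ^{k+1}] ≤ (1 − α/2) ℋ^k + (1 + 2p/α)(2p/n) ( ∑_{i=1}^n ‖∇f_i(w^k) − ∇f_i(x^k)‖² + ∑_{i=1}^n ‖∇f_i(y^k) − ∇f_i(x^k)‖² ). -/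
open MeasureTheory
open scoped RealInnerProductSpace

section Helpers

variable {Ω : Type*} [MeasureSpace Ω] [IsProbabilityMeasure (volume : Measure Ω)]
variable {E : Type*} [NormedAddCommGroup E] [InnerProductSpace ℝ E] [CompleteSpace E]

lemma aux_young_normsq (a b : E) {t : ℝ} (ht : 0 < t) :
    ‖a + b‖ ^ 2 ≤ (1 + t) * ‖a‖ ^ 2 + (1 + 1 / t) * ‖b‖ ^ 2 := by
  have h2 : ‖a + b‖ ^ 2 ≤ (‖a‖ + ‖b‖) ^ 2 := by
    nlinarith [norm_add_le a b, norm_nonneg (a + b), norm_nonneg a, norm_nonneg b]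
  have h3 : (1 + t) * ‖a‖ ^ 2 + (1 + 1 / t) * ‖b‖ ^ 2 - (‖a‖ + ‖b‖) ^ 2
      = (t * ‖a‖ - ‖b‖) ^ 2 / t := by field_simp; ring
  nlinarith [div_nonneg (sq_nonneg (t * ‖a‖ - ‖b‖)) ht.le]

lemma aux_integrable_normsq (Cf : Ω → E) (u c : E) (α : ℝ)
    (hint : Integrable Cf) (hsq : Integrable fun ω => ‖Cf ω - u‖ ^ 2) :
    Integrable fun ω => ‖α • Cf ω - u + c‖ ^ 2 := by
  have hD : Integrable (fun ω => Cf ω - u) := hint.sub (integrable_const u)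
  set e : E := α • u - u + c with he
  have hpt : ∀ ω, ‖α • Cf ω - u + c‖ ^ 2
      = α ^ 2 * ‖Cf ω - u‖ ^ 2 + 2 * α * ⟪e, Cf ω - u⟫ + ‖e‖ ^ 2 := by
    intro ω
    have h0 : α • Cf ω - u + c = α • (Cf ω - u) + e := by
      rw [he, smul_sub]; abel
    have h1 : ⟪α • (Cf ω - u), e⟫ = α * ⟪e, Cf ω - u⟫ := by
      rw [real_inner_smul_left, real_inner_comm]
    rw [h0, norm_add_sq_real, h1, norm_smul]
    simp [mul_pow, sq_abs]; ring
  simp_rw [hpt]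
  exact ((hsq.const_mul _).add ((hD.const_inner e).const_mul _)).add (integrable_const _)

lemma aux_compress (Cf : Ω → E) (u : E) (α om : ℝ)
    (hint : Integrable Cf) (hmean : (∫ ω, Cf ω) = u)
    (hsq : Integrable fun ω => ‖Cf ω - u‖ ^ 2)
    (hvar : (∫ ω, ‖Cf ω - u‖ ^ 2) ≤ om * ‖u‖ ^ 2)
    (hom : 0 ≤ om) (hα0 : 0 < α) (hαom : α * (1 + om) ≤ 1) :
    (∫ ω, ‖α • Cf ω - u‖ ^ 2) ≤ (1 - α) * ‖u‖ ^ 2 := by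
  have hD : Integrable (fun ω => Cf ω - u) := hint.sub (integrable_const u)
  have hD0 : (∫ ω, (Cf ω - u)) = 0 := by
    rw [integral_sub hint (integrable_const u), hmean, integral_const]
    simp
  have hpt : ∀ ω, ‖α • Cf ω - u‖ ^ 2
      = α ^ 2 * ‖Cf ω - u‖ ^ 2 + (2 * α * (α - 1)) * ⟪u, Cf ω - u⟫
        + (α - 1) ^ 2 * ‖u‖ ^ 2 := by
    intro ω
    have h0 : α • Cf ω - u = α • (Cf ω - u) + (α - 1) • u := by
      rw [smul_sub, sub_smul, one_smul]; abel
    have h1 : ⟪α • (Cf ω - u), (α - 1) • u⟫ = (α * (α - 1)) * ⟪u, Cf ω - u⟫ := by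
      rw [real_inner_smul_left, real_inner_smul_right, real_inner_comm]; ring
    rw [h0, norm_add_sq_real, h1, norm_smul, norm_smul]
    simp [mul_pow, sq_abs]; ring
  have i1 : Integrable (fun ω => α ^ 2 * ‖Cf ω - u‖ ^ 2) := hsq.const_mul _
  have i2 : Integrable (fun ω => (2 * α * (α - 1)) * ⟪u, Cf ω - u⟫) :=
    (hD.const_inner u).const_mul _
  have i3 : Integrable (fun ω => α ^ 2 * ‖Cf ω - u‖ ^ 2
      + (2 * α * (α - 1)) * ⟪u, Cf ω - u⟫) := i1.add i2
  simp_rw [hpt]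
  rw [integral_add i3 (integrable_const _), integral_add i1 i2,
    integral_const_mul, integral_const_mul, integral_inner hD, hD0, integral_const]
  simp only [inner_zero_right, mul_zero, probReal_univ, ENNReal.toReal_one, one_smul, add_zero]
  have key : α ^ 2 * (1 + om) ≤ α := by nlinarith
  nlinarith [mul_le_mul_of_nonneg_left hvar (sq_nonneg α), sq_nonneg ‖u‖, key]

lemma aux_measurePreserving_eval {ι : Type*} [Fintype ι] [DecidableEq ι] (i : ι) :
    MeasurePreserving (Function.eval i) (volume : Measure (ι → Ω)) volume := by
  refine ⟨measurable_pi_apply i, ?_⟩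
  refine Measure.ext fun s hs => ?_
  rw [Measure.map_apply (measurable_pi_apply i) hs]
  have hpre : Function.eval i ⁻¹' s
      = Set.pi Set.univ (Function.update (fun _ : ι => (Set.univ : Set Ω)) i s) := by
    ext x
    simp only [Set.mem_preimage, Set.mem_pi, Set.mem_univ, forall_true_left]
    constructor
    · intro hx j
      rcases eq_or_ne j i with rfl | hj
      · simpa [Function.update] using hx
      · simp [Function.update, hj]
    · intro hx
      have := hx i
      simpa [Function.update] using this
  rw [hpre]
  have hv : (volume : Measure (ι → Ω)) = Measure.pi fun _ => volume := rfl
  rw [hv, Measure.pi_pi]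
  rw [Fintype.prod_eq_single i (fun j hj => by simp [Function.update, hj, measure_univ])]
  simp [Function.update]

lemma aux_integrable_comp_eval {ι : Type*} [Fintype ι] [DecidableEq ι] (i : ι)
    (g : Ω → ℝ) (hg : Integrable g) :
    Integrable (fun ωc : ι → Ω => g (ωc i)) :=
  ((aux_measurePreserving_eval (Ω := Ω) i).integrable_comp hg.aestronglyMeasurable).mpr hg

lemma aux_integral_comp_eval {ι : Type*} [Fintype ι] [DecidableEq ι] (i : ι)
    (g : Ω → ℝ) (hg : AEStronglyMeasurable g volume) :
    (∫ ωc : ι → Ω, g (ωc i)) = ∫ ω, g ω := by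
  have h := (aux_measurePreserving_eval (Ω := Ω) (ι := ι) i).map_eq
  conv_rhs => rw [← h]
  rw [integral_map (measurable_pi_apply i).aemeasurable (h ▸ hg)]

end Helpers

set_option maxHeartbeats 2000000 in
theorem adiana_shift_recursion {d n : ℕ} (hn : 0 < n)
    (fi : Fin n → EuclideanSpace ℝ (Fin d) → ℝ)
    (hdiff : ∀ i, Differentiable ℝ (fi i))
    (xk yk wk : EuclideanSpace ℝ (Fin d))
    (hk : Fin n → EuclideanSpace ℝ (Fin d))
    (om α p : ℝ) (hom : 0 ≤ om) (hα0 : 0 < α) (hα : α ≤ 1 / (1 + om))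
    (hp0 : 0 ≤ p) (hp1 : p ≤ 1)
    {Ωc Ωb : Type*} [MeasureSpace Ωc] [MeasureSpace Ωb]
    [IsProbabilityMeasure (volume : Measure Ωc)]
    [IsProbabilityMeasure (volume : Measure Ωb)]
    (C : Fin n → Ωc → EuclideanSpace ℝ (Fin d) → EuclideanSpace ℝ (Fin d))
    (hCint : ∀ i v, Integrable (fun ω => C i ω v))
    (hCmean : ∀ i v, (∫ ω, C i ω v) = v)
    (hCsqint : ∀ i v, Integrable (fun ω => ‖C i ω v - v‖ ^ 2))
    (hCvar : ∀ i v, (∫ ω, ‖C i ω v - v‖ ^ 2) ≤ om * ‖v‖ ^ 2)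
    (A : Set Ωb) (hA : MeasurableSet A) (hAp : volume A = ENNReal.ofReal p)
    (hnext : Fin n → (Fin n → Ωc) → EuclideanSpace ℝ (Fin d))
    (hhnext : ∀ i ωc, hnext i ωc = hk i + α • C i (ωc i) (gradient (fi i) wk - hk i))
    (wnext : Ωb → EuclideanSpace ℝ (Fin d))
    (hw1 : ∀ ωb ∈ A, wnext ωb = yk) (hw2 : ∀ ωb ∉ A, wnext ωb = wk) :
    (∫ ω : (Fin n → Ωc) × Ωb,
        (1 / (n : ℝ)) * ∑ i, ‖hnext i ω.1 - gradient (fi i) (wnext ω.2)‖ ^ 2)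
      ≤ (1 - α / 2) * ((1 / (n : ℝ)) * ∑ i, ‖hk i - gradient (fi i) wk‖ ^ 2)
        + (1 + 2 * p / α) * (2 * p / (n : ℝ))
          * ((∑ i, ‖gradient (fi i) wk - gradient (fi i) xk‖ ^ 2)
            + ∑ i, ‖gradient (fi i) yk - gradient (fi i) xk‖ ^ 2) := by
  classical
  have hn' : (0 : ℝ) < n := by exact_mod_cast hn
  set v : Fin n → EuclideanSpace ℝ (Fin d) := fun i => gradient (fi i) wk - hk i with hv
  set b : Fin n → EuclideanSpace ℝ (Fin d) :=
    fun i => gradient (fi i) wk - gradient (fi i) yk with hb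
  set gwf : Fin n → Ωc → ℝ := fun i ω => ‖α • C i ω (v i) - v i‖ ^ 2 with hgwf
  set gyf : Fin n → Ωc → ℝ := fun i ω => ‖α • C i ω (v i) - v i + b i‖ ^ 2 with hgyf
  have hgwfint : ∀ i, Integrable (gwf i) := by
    intro i
    have h := aux_integrable_normsq (fun ω => C i ω (v i)) (v i) 0 α
      (hCint i (v i)) (hCsqint i (v i))
    simpa [hgwf] using h
  have hgyfint : ∀ i, Integrable (gyf i) := by
    intro i
    have h := aux_integrable_normsq (fun ω => C i ω (v i)) (v i) (b i) α
      (hCint i (v i)) (hCsqint i (v i))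
    simpa [hgyf] using h
  have hαom : α * (1 + om) ≤ 1 := (le_div_iff₀ (by linarith : (0:ℝ) < 1 + om)).mp hα
  have hIwle : ∀ i, (∫ ω, gwf i ω) ≤ (1 - α) * ‖v i‖ ^ 2 := by
    intro i
    have h := aux_compress (fun ω => C i ω (v i)) (v i) α om
      (hCint i (v i)) (hCmean i (v i)) (hCsqint i (v i)) (hCvar i (v i)) hom hα0 hαom
    simpa [hgwf] using h
  have hIw0 : ∀ i, 0 ≤ (∫ ω, gwf i ω) :=
    fun i => integral_nonneg fun ω => by positivity
  -- pi-level sums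
  set Sw : (Fin n → Ωc) → ℝ :=
    fun ωc => ∑ i, ‖hnext i ωc - gradient (fi i) wk‖ ^ 2 with hSw
  set Sy : (Fin n → Ωc) → ℝ :=
    fun ωc => ∑ i, ‖hnext i ωc - gradient (fi i) yk‖ ^ 2 with hSy
  have hSweq : ∀ ωc, Sw ωc = ∑ i, gwf i (ωc i) := by
    intro ωc
    rw [hSw]
    refine Finset.sum_congr rfl fun i _ => ?_
    rw [hgwf]
    congr 2
    simp only [hhnext, hv]
    abel
  have hSyeq : ∀ ωc, Sy ωc = ∑ i, gyf i (ωc i) := by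
    intro ωc
    rw [hSy]
    refine Finset.sum_congr rfl fun i _ => ?_
    rw [hgyf]
    congr 2
    simp only [hhnext, hv, hb]
    abel
  have hSwInt : Integrable Sw := by
    rw [show Sw = fun ωc => ∑ i, gwf i (ωc i) from funext hSweq]
    exact integrable_finset_sum _ fun i _ => aux_integrable_comp_eval i _ (hgwfint i)
  have hSyInt : Integrable Sy := by
    rw [show Sy = fun ωc => ∑ i, gyf i (ωc i) from funext hSyeq]
    exact integrable_finset_sum _ fun i _ => aux_integrable_comp_eval i _ (hgyfint i)
  have hISw : (∫ ωc, Sw ωc) = ∑ i, ∫ ω, gwf i ω := by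
    simp_rw [hSweq]
    rw [integral_finset_sum _ fun i _ => aux_integrable_comp_eval i _ (hgwfint i)]
    exact Finset.sum_congr rfl fun i _ =>
      aux_integral_comp_eval i _ (hgwfint i).aestronglyMeasurable
  have hISy : (∫ ωc, Sy ωc) = ∑ i, ∫ ω, gyf i ω := by
    simp_rw [hSyeq]
    rw [integral_finset_sum _ fun i _ => aux_integrable_comp_eval i _ (hgyfint i)]
    exact Finset.sum_congr rfl fun i _ =>
      aux_integral_comp_eval i _ (hgyfint i).aestronglyMeasurable
  -- Bernoulli side
  have hχint : Integrable (A.indicator (1 : Ωb → ℝ)) := (integrable_const 1).indicator hA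
  have hχcint : Integrable (Aᶜ.indicator (1 : Ωb → ℝ)) :=
    (integrable_const 1).indicator hA.compl
  have hχ : (∫ ωb, A.indicator (1 : Ωb → ℝ) ωb) = p := by
    rw [integral_indicator_one hA, measureReal_def, hAp, ENNReal.toReal_ofReal hp0]
  have hχc : (∫ ωb, Aᶜ.indicator (1 : Ωb → ℝ) ωb) = 1 - p := by
    rw [integral_indicator_one hA.compl, measureReal_def, measure_compl hA (measure_ne_top _ _), measure_univ, hAp,
      ENNReal.toReal_sub_of_le (ENNReal.ofReal_le_one.mpr hp1) ENNReal.one_ne_top]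
    simp [ENNReal.toReal_ofReal hp0]
  have hptw : ∀ ω : (Fin n → Ωc) × Ωb,
      (1 / (n : ℝ)) * ∑ i, ‖hnext i ω.1 - gradient (fi i) (wnext ω.2)‖ ^ 2
        = (1 / (n : ℝ)) * (Sw ω.1 * Aᶜ.indicator (1 : Ωb → ℝ) ω.2
            + Sy ω.1 * A.indicator (1 : Ωb → ℝ) ω.2) := by
    intro ω
    by_cases h : ω.2 ∈ A
    · rw [hw1 _ h, Set.indicator_of_mem h, Set.indicator_of_notMem (by simpa using h)]
      simp only [hSy, Pi.one_apply]
      ring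
    · rw [hw2 _ h, Set.indicator_of_notMem h, Set.indicator_of_mem (Set.mem_compl h)]
      simp only [hSw, Pi.one_apply]
      ring
  have hmain : (∫ ω : (Fin n → Ωc) × Ωb,
      (1 / (n : ℝ)) * ∑ i, ‖hnext i ω.1 - gradient (fi i) (wnext ω.2)‖ ^ 2)
      = (1 / (n : ℝ)) * ((1 - p) * (∫ ωc, Sw ωc) + p * (∫ ωc, Sy ωc)) := by
    rw [integral_congr_ae (ae_of_all _ hptw), integral_const_mul]
    have hvol : (volume : Measure ((Fin n → Ωc) × Ωb))
        = (volume : Measure (Fin n → Ωc)).prod volume := rfl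
    have h1 : Integrable (fun z : (Fin n → Ωc) × Ωb =>
        Sw z.1 * Aᶜ.indicator (1 : Ωb → ℝ) z.2) (volume : Measure _) := by
      rw [hvol]; exact hSwInt.mul_prod hχcint
    have h2 : Integrable (fun z : (Fin n → Ωc) × Ωb =>
        Sy z.1 * A.indicator (1 : Ωb → ℝ) z.2) (volume : Measure _) := by
      rw [hvol]; exact hSyInt.mul_prod hχint
    rw [integral_add h1 h2, hvol, integral_prod_mul, integral_prod_mul, hχ, hχc]
    ring
  rw [hmain, hISw, hISy]
  have hSVeq : ∑ i, ‖hk i - gradient (fi i) wk‖ ^ 2 = ∑ i, ‖v i‖ ^ 2 := by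
    refine Finset.sum_congr rfl fun i _ => ?_
    rw [hv, norm_sub_rev]
  rw [hSVeq]
  set Iw := ∑ i, ∫ ω, gwf i ω with hIwdef
  set Iy := ∑ i, ∫ ω, gyf i ω with hIydef
  set SV := ∑ i, ‖v i‖ ^ 2 with hSVdef
  set SB := ∑ i, ‖b i‖ ^ 2 with hSBdef
  set W := ∑ i, ‖gradient (fi i) wk - gradient (fi i) xk‖ ^ 2 with hWdef
  set Y := ∑ i, ‖gradient (fi i) yk - gradient (fi i) xk‖ ^ 2 with hYdef
  have hIwSV : Iw ≤ (1 - α) * SV := by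
    rw [hIwdef, hSVdef, Finset.mul_sum]
    exact Finset.sum_le_sum fun i _ => hIwle i
  have hIw0' : 0 ≤ Iw := Finset.sum_nonneg fun i _ => hIw0 i
  have hSV0 : 0 ≤ SV := Finset.sum_nonneg fun i _ => by positivity
  have hWY0 : 0 ≤ W + Y := by
    have : 0 ≤ W := Finset.sum_nonneg fun i _ => by positivity
    have : 0 ≤ Y := Finset.sum_nonneg fun i _ => by positivity
    linarith [show (0:ℝ) ≤ W from Finset.sum_nonneg fun i _ => by positivity]
  have hSB2 : SB ≤ 2 * (W + Y) := by
    have h : ∀ i : Fin n, ‖b i‖ ^ 2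
        ≤ 2 * ‖gradient (fi i) wk - gradient (fi i) xk‖ ^ 2
          + 2 * ‖gradient (fi i) yk - gradient (fi i) xk‖ ^ 2 := by
      intro i
      have hbi : b i = (gradient (fi i) wk - gradient (fi i) xk)
          - (gradient (fi i) yk - gradient (fi i) xk) := by rw [hb]; abel
      rw [hbi]
      nlinarith [norm_sub_le (gradient (fi i) wk - gradient (fi i) xk)
          (gradient (fi i) yk - gradient (fi i) xk),
        norm_nonneg ((gradient (fi i) wk - gradient (fi i) xk)
          - (gradient (fi i) yk - gradient (fi i) xk)),
        norm_nonneg (gradient (fi i) wk - gradient (fi i) xk),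
        norm_nonneg (gradient (fi i) yk - gradient (fi i) xk),
        sq_nonneg (‖gradient (fi i) wk - gradient (fi i) xk‖
          - ‖gradient (fi i) yk - gradient (fi i) xk‖)]
    calc SB ≤ ∑ i, (2 * ‖gradient (fi i) wk - gradient (fi i) xk‖ ^ 2
          + 2 * ‖gradient (fi i) yk - gradient (fi i) xk‖ ^ 2) :=
        Finset.sum_le_sum fun i _ => h i
      _ = 2 * (W + Y) := by
        rw [Finset.sum_add_distrib, hWdef, hYdef, ← Finset.mul_sum, ← Finset.mul_sum]
        ring
  have key : (1 - p) * Iw + p * Iy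
      ≤ (1 - α / 2) * SV + ((1 + 2 * p / α) * (2 * p)) * (W + Y) := by
    rcases hp0.eq_or_lt with h0 | hp
    · rw [← h0]
      have : (1 - α) * SV ≤ (1 - α / 2) * SV := by nlinarith [mul_nonneg hα0.le hSV0]
      nlinarith [hIwSV]
    · set t := α / (2 * p) with htdef
      have ht : 0 < t := div_pos hα0 (by linarith)
      have h1t : 1 / t = 2 * p / α := one_div_div α (2 * p)
      have hIySB : Iy ≤ (1 + t) * Iw + (1 + 2 * p / α) * SB := by
        have hper : ∀ i : Fin n, (∫ ω, gyf i ω)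
            ≤ (1 + t) * (∫ ω, gwf i ω) + (1 + 2 * p / α) * ‖b i‖ ^ 2 := by
          intro i
          have hmono : (∫ ω, gyf i ω)
              ≤ ∫ ω, ((1 + t) * gwf i ω + (1 + 1 / t) * ‖b i‖ ^ 2) := by
            refine integral_mono_of_nonneg (ae_of_all _ fun ω => ?_)
              (((hgwfint i).const_mul _).add (integrable_const _)) (ae_of_all _ fun ω => ?_)
            · rw [hgyf]; positivity
            · rw [hgyf, hgwf]; exact aux_young_normsq _ _ ht
          have hcomp : (∫ ω, ((1 + t) * gwf i ω + (1 + 1 / t) * ‖b i‖ ^ 2))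
              = (1 + t) * (∫ ω, gwf i ω) + (1 + 1 / t) * ‖b i‖ ^ 2 := by
            rw [integral_add ((hgwfint i).const_mul _) (integrable_const _),
              integral_const_mul, integral_const, probReal_univ]
            simp
          rw [h1t] at hmono hcomp
          linarith [hmono, hcomp.le]
        calc Iy = ∑ i, ∫ ω, gyf i ω := hIydef
          _ ≤ ∑ i, ((1 + t) * (∫ ω, gwf i ω) + (1 + 2 * p / α) * ‖b i‖ ^ 2) :=
            Finset.sum_le_sum fun i _ => hper i
          _ = (1 + t) * Iw + (1 + 2 * p / α) * SB := by
            rw [Finset.sum_add_distrib, hIwdef, hSBdef, ← Finset.mul_sum, ← Finset.mul_sum]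
      have hpt : p * t = α / 2 := by
        rw [htdef]
        field_simp
      have m1 : p * Iy ≤ (p + α / 2) * Iw + (p * (1 + 2 * p / α)) * SB := by
        calc p * Iy ≤ p * ((1 + t) * Iw + (1 + 2 * p / α) * SB) :=
            mul_le_mul_of_nonneg_left hIySB hp0
          _ = (p + p * t) * Iw + (p * (1 + 2 * p / α)) * SB := by ring
          _ = (p + α / 2) * Iw + (p * (1 + 2 * p / α)) * SB := by rw [hpt]
      have m2 : (1 + α / 2) * Iw ≤ (1 + α / 2) * ((1 - α) * SV) :=
        mul_le_mul_of_nonneg_left hIwSV (by linarith)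
      have m3 : (p * (1 + 2 * p / α)) * SB ≤ (p * (1 + 2 * p / α)) * (2 * (W + Y)) := by
        refine mul_le_mul_of_nonneg_left hSB2 (mul_nonneg hp0 ?_)
        have h2pα : 0 ≤ 2 * p / α := div_nonneg (by linarith) hα0.le
        linarith
      have m4 : (1 + α / 2) * ((1 - α) * SV) ≤ (1 - α / 2) * SV := by
        nlinarith [mul_nonneg (mul_nonneg hα0.le hα0.le) hSV0]
      nlinarith [m1, m2, m3, m4]
  exact (mul_le_mul_of_nonneg_left key (by positivity : (0:ℝ) ≤ 1 / (n : ℝ))).trans_eq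
    (by ring)
end

section
/- Let f : ℝ^d → ℝ be differentiable with L-Lipschitz continuous gradient, let ω ≥ 0, η > 0, x^k ∈ ℝ^d, and let C be an ω-compression operator. For the one-step CGD update x^{k+1} = x^k − η C(∇f(x^k)), it holds that E[f(x^{k+1})] ≤ f(x^k) − η (1 − Lη(1+ω)/2) ‖∇f(x^k)‖², where the expectation is over the randomness of C. -/
open MeasureTheory
open scoped RealInnerProductSpace

lemma quad_abs {F : Type*} [NormedAddCommGroup F] [InnerProductSpace ℝ F] [CompleteSpace F]
    (f : F → ℝ) (L : ℝ) (hdiff : Differentiable ℝ f)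
    (hlip : ∀ x y, ‖gradient f x - gradient f y‖ ≤ L * ‖x - y‖) (x y : F) :
    |f y - f x - ⟪gradient f x, y - x⟫| ≤ L / 2 * ‖y - x‖ ^ 2 := by
  set v := y - x with hv
  set φ' : ℝ → ℝ := fun t => ⟪gradient f (x + t • v), v⟫ with hφ'
  have hline : ∀ t : ℝ, HasDerivAt (fun s : ℝ => x + s • v) v t := by
    intro t
    simpa using ((hasDerivAt_id t).smul_const v).const_add x
  have hφ : ∀ t : ℝ, HasDerivAt (fun s => f (x + s • v)) (φ' t) t := by
    intro t
    have h1 := ((hdiff (x + t • v)).hasGradientAt).hasFDerivAt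
    have h2 := h1.comp_hasDerivAt t (hline t)
    exact h2
  have hgl : LipschitzWith (Real.toNNReal L) (gradient f) := by
    apply LipschitzWith.of_dist_le_mul
    intro a b
    calc dist (gradient f a) (gradient f b) = ‖gradient f a - gradient f b‖ := dist_eq_norm _ _
      _ ≤ L * ‖a - b‖ := hlip a b
      _ ≤ Real.toNNReal L * dist a b := by
          rw [dist_eq_norm]
          exact mul_le_mul_of_nonneg_right (Real.le_coe_toNNReal L) (norm_nonneg _)
  have hcont : Continuous φ' := by
    apply Continuous.inner
    · exact hgl.continuous.comp (by continuity)
    · exact continuous_const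
  have hFTC : ∫ t in (0:ℝ)..1, φ' t = f y - f x := by
    have := intervalIntegral.integral_eq_sub_of_hasDerivAt (f := fun s => f (x + s • v))
      (fun t _ => hφ t) (hcont.intervalIntegrable 0 1)
    simpa [hv] using this
  have key : f y - f x - ⟪gradient f x, v⟫ = ∫ t in (0:ℝ)..1, (φ' t - φ' 0) := by
    rw [intervalIntegral.integral_sub (hcont.intervalIntegrable 0 1)
      (intervalIntegrable_const), hFTC]
    simp [φ']
  rw [key]
  have hb : ∀ t ∈ Set.uIoc (0:ℝ) 1, ‖φ' t - φ' 0‖ ≤ L * ‖v‖ ^ 2 * t := by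
    intro t ht
    rw [Set.uIoc_of_le zero_le_one] at ht
    have h0 : φ' t - φ' 0 = ⟪gradient f (x + t • v) - gradient f (x + (0:ℝ) • v), v⟫ := by
      simp [φ', inner_sub_left]
    calc ‖φ' t - φ' 0‖ ≤ ‖gradient f (x + t • v) - gradient f (x + (0:ℝ) • v)‖ * ‖v‖ := by
          rw [h0]; exact abs_real_inner_le_norm _ _
      _ ≤ (L * ‖(x + t • v) - (x + (0:ℝ) • v)‖) * ‖v‖ :=
          mul_le_mul_of_nonneg_right (hlip _ _) (norm_nonneg _)
      _ = L * ‖v‖ ^ 2 * t := by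
          simp [norm_smul, abs_of_nonneg ht.1.le]
          ring
  have hLv : 0 ≤ L * ‖v‖ ^ 2 := by
    have := hb 1 (by rw [Set.uIoc_of_le zero_le_one]; exact ⟨zero_lt_one, le_refl 1⟩)
    nlinarith [norm_nonneg (φ' 1 - φ' 0)]
  calc |∫ t in (0:ℝ)..1, (φ' t - φ' 0)|
      ≤ |∫ t in (0:ℝ)..1, L * ‖v‖ ^ 2 * t| := by
        rw [← Real.norm_eq_abs]
        apply intervalIntegral.norm_integral_le_abs_of_norm_le _
          (((by fun_prop : Continuous fun t : ℝ => L * ‖v‖ ^ 2 * t)).intervalIntegrable 0 1)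
        filter_upwards [ae_restrict_mem measurableSet_Ioc] using hb
    _ = L / 2 * ‖v‖ ^ 2 := by
        rw [intervalIntegral.integral_const_mul, integral_id, abs_of_nonneg (by nlinarith)]
        ring

theorem cgd_one_step_descent {d : ℕ}
    (f : EuclideanSpace ℝ (Fin d) → ℝ) (L : ℝ)
    (hdiff : Differentiable ℝ f)
    (hlip : ∀ x y, ‖gradient f x - gradient f y‖ ≤ L * ‖x - y‖)
    (om η : ℝ) (hom : 0 ≤ om) (hη : 0 < η)
    {Ω : Type*} [MeasureSpace Ω] [IsProbabilityMeasure (volume : Measure Ω)]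
    (C : Ω → EuclideanSpace ℝ (Fin d) → EuclideanSpace ℝ (Fin d))
    (hCint : ∀ v, Integrable (fun ω => C ω v))
    (hCmean : ∀ v, (∫ ω, C ω v) = v)
    (hCsqint : ∀ v, Integrable (fun ω => ‖C ω v - v‖ ^ 2))
    (hCvar : ∀ v, (∫ ω, ‖C ω v - v‖ ^ 2) ≤ om * ‖v‖ ^ 2)
    (xk : EuclideanSpace ℝ (Fin d)) (xnext : Ω → EuclideanSpace ℝ (Fin d))
    (hx : ∀ ω, xnext ω = xk - η • C ω (gradient f xk)) :
    (∫ ω, f (xnext ω))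
      ≤ f xk - η * (1 - L * η * (1 + om) / 2) * ‖gradient f xk‖ ^ 2 := by
  rcases subsingleton_or_nontrivial (EuclideanSpace ℝ (Fin d)) with hsub | hnt
  · have hxe : ∀ ω, xnext ω = xk := fun ω => Subsingleton.elim _ _
    have hg0 : gradient f xk = (0 : EuclideanSpace ℝ (Fin d)) := Subsingleton.elim _ _
    simp only [hxe, hg0, norm_zero]
    simp
  · have hL : 0 ≤ L := by
      obtain ⟨a, b, hab⟩ := exists_pair_ne (EuclideanSpace ℝ (Fin d))
      have h1 := (norm_nonneg (gradient f a - gradient f b)).trans (hlip a b)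
      have h2 : 0 < ‖a - b‖ := by simpa [sub_eq_zero] using hab
      nlinarith
    set g := gradient f xk with hg
    set G : Ω → EuclideanSpace ℝ (Fin d) := fun ω => C ω g with hG
    have hGint : Integrable G := hCint g
    have hinner_int : Integrable (fun ω => ⟪g, G ω⟫) := hGint.const_inner g
    have hinner_eq : ∫ ω, ⟪g, G ω⟫ = ‖g‖ ^ 2 := by
      rw [integral_inner hGint]
      show ⟪g, ∫ ω, C ω g⟫ = ‖g‖ ^ 2
      rw [hCmean g, real_inner_self_eq_norm_sq]
    have hsq_expand : ∀ ω, ‖G ω‖ ^ 2 = ‖G ω - g‖ ^ 2 + 2 * ⟪G ω - g, g⟫ + ‖g‖ ^ 2 := by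
      intro ω
      have := norm_add_sq_real (G ω - g) g
      simpa using this
    have hdiff_int : Integrable (fun ω => G ω - g) := hGint.sub (integrable_const g)
    have hsqCg : Integrable (fun ω => ‖G ω - g‖ ^ 2) := hCsqint g
    have hsqint : Integrable (fun ω => ‖G ω‖ ^ 2) := by
      have he : (fun ω => ‖G ω‖ ^ 2)
          = fun ω => ‖G ω - g‖ ^ 2 + 2 * ⟪G ω - g, g⟫ + ‖g‖ ^ 2 := funext hsq_expand
      rw [he]
      exact (hsqCg.add ((hdiff_int.inner_const g).const_mul 2)).add (integrable_const _)
    have hzero : ∫ ω, ⟪G ω - g, g⟫ = 0 := by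
      have h1 : ∀ ω, ⟪G ω - g, g⟫ = ⟪g, G ω - g⟫ := fun ω => real_inner_comm _ _
      simp_rw [h1]
      rw [integral_inner hdiff_int]
      rw [integral_sub hGint (integrable_const g), integral_const]
      show ⟪g, (∫ ω, C ω g) - _⟫ = 0
      simp [hCmean g]
    have hsq_bound : ∫ ω, ‖G ω‖ ^ 2 ≤ (1 + om) * ‖g‖ ^ 2 := by
      have hCg := hCvar g
      calc ∫ ω, ‖G ω‖ ^ 2
          = ∫ ω, (‖G ω - g‖ ^ 2 + 2 * ⟪G ω - g, g⟫ + ‖g‖ ^ 2) := by simp_rw [hsq_expand]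
        _ = (∫ ω, ‖G ω - g‖ ^ 2) + 2 * (∫ ω, ⟪G ω - g, g⟫) + ‖g‖ ^ 2 := by
            have i1 := integral_add (μ := volume) (f := fun ω => ‖G ω - g‖ ^ 2)
              (g := fun ω => 2 * ⟪G ω - g, g⟫) hsqCg
              ((hdiff_int.inner_const g).const_mul 2)
            have i2 := integral_add (μ := volume)
              (f := fun ω => ‖G ω - g‖ ^ 2 + 2 * ⟪G ω - g, g⟫)
              (g := fun _ => ‖g‖ ^ 2)
              (hsqCg.add ((hdiff_int.inner_const g).const_mul 2)) (integrable_const _)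
            rw [i2, i1, integral_const_mul, integral_const]
            simp
        _ ≤ om * ‖g‖ ^ 2 + 2 * 0 + ‖g‖ ^ 2 := by
            rw [hzero]
            exact add_le_add_left (add_le_add_left hCg _) _
        _ = (1 + om) * ‖g‖ ^ 2 := by ring
    -- pointwise quadratic bounds
    have hquad : ∀ ω : Ω,
        |f (xnext ω) - f xk - ⟪g, xnext ω - xk⟫| ≤ L / 2 * η ^ 2 * ‖G ω‖ ^ 2 := by
      intro ω
      have h1 := quad_abs f L hdiff hlip xk (xnext ω)
      have h2 : xnext ω - xk = -(η • G ω) := by rw [hx ω]; abel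
      have h3 : ‖xnext ω - xk‖ ^ 2 = η ^ 2 * ‖G ω‖ ^ 2 := by
        rw [h2, norm_neg, norm_smul, mul_pow, Real.norm_eq_abs, sq_abs]
      calc |f (xnext ω) - f xk - ⟪g, xnext ω - xk⟫|
          = |f (xnext ω) - f xk - ⟪gradient f xk, xnext ω - xk⟫| := by rw [hg]
        _ ≤ L / 2 * ‖xnext ω - xk‖ ^ 2 := h1
        _ = L / 2 * η ^ 2 * ‖G ω‖ ^ 2 := by rw [h3]; ring
    have hinner2 : ∀ ω : Ω, ⟪g, xnext ω - xk⟫ = -(η * ⟪g, G ω⟫) := by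
      intro ω
      have h2 : xnext ω - xk = -(η • G ω) := by rw [hx ω]; abel
      rw [h2, inner_neg_right, real_inner_smul_right]
    -- measurability of the remainder
    have hGm : AEStronglyMeasurable G volume := hGint.1
    have hxm : AEStronglyMeasurable (fun ω => f (xnext ω)) volume := by
      have hc : Continuous fun p : EuclideanSpace ℝ (Fin d) => f (xk - η • p) :=
        hdiff.continuous.comp (continuous_const.sub (continuous_id.const_smul η))
      have := hc.comp_aestronglyMeasurable hGm
      apply this.congr
      filter_upwards with ω
      simp [hx ω, hG]
    have hrem : Integrable (fun ω => f (xnext ω) - f xk - ⟪g, xnext ω - xk⟫) := by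
      apply Integrable.mono' (hsqint.const_mul (L / 2 * η ^ 2))
      · apply AEStronglyMeasurable.sub (hxm.sub aestronglyMeasurable_const)
        have : (fun ω => ⟪g, xnext ω - xk⟫) = fun ω => -(η * ⟪g, G ω⟫) := funext hinner2
        rw [this]
        exact ((hinner_int.const_mul η).neg).1
      · filter_upwards with ω
        simpa [Real.norm_eq_abs, mul_assoc] using hquad ω
    have hfint : Integrable (fun ω => f (xnext ω)) := by
      have he : (fun ω => f (xnext ω))
          = fun ω => (f (xnext ω) - f xk - ⟪g, xnext ω - xk⟫)
              + (f xk + -(η * ⟪g, G ω⟫)) := by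
        funext ω
        rw [hinner2 ω]
        ring
      rw [he]
      exact hrem.add ((integrable_const _).add ((hinner_int.const_mul η).neg))
    -- main estimate
    have hptw : ∀ ω : Ω,
        f (xnext ω) ≤ f xk - η * ⟪g, G ω⟫ + L / 2 * η ^ 2 * ‖G ω‖ ^ 2 := by
      intro ω
      have h1 := (abs_le.mp (hquad ω)).2
      rw [hinner2 ω] at h1
      linarith
    have hu : Integrable (fun ω => f xk - η * ⟪g, G ω⟫ + L / 2 * η ^ 2 * ‖G ω‖ ^ 2) :=
      ((integrable_const _).sub (hinner_int.const_mul η)).add (hsqint.const_mul _)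
    calc ∫ ω, f (xnext ω)
        ≤ ∫ ω, (f xk - η * ⟪g, G ω⟫ + L / 2 * η ^ 2 * ‖G ω‖ ^ 2) :=
          integral_mono hfint hu hptw
      _ = f xk - η * ‖g‖ ^ 2 + L / 2 * η ^ 2 * ∫ ω, ‖G ω‖ ^ 2 := by
          have j1 := integral_sub (μ := volume) (f := fun _ : Ω => f xk)
            (g := fun ω => η * ⟪g, G ω⟫) (integrable_const _) (hinner_int.const_mul η)
          have j2 := integral_add (μ := volume)
            (f := fun ω => f xk - η * ⟪g, G ω⟫)
            (g := fun ω => L / 2 * η ^ 2 * ‖G ω‖ ^ 2)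
            ((integrable_const _).sub (hinner_int.const_mul η)) (hsqint.const_mul _)
          rw [j2, j1, integral_const_mul, integral_const_mul, hinner_eq, integral_const]
          simp
      _ ≤ f xk - η * ‖g‖ ^ 2 + L / 2 * η ^ 2 * ((1 + om) * ‖g‖ ^ 2) := by
          have hc : 0 ≤ L / 2 * η ^ 2 := by positivity
          nlinarith [hsq_bound]
      _ = f xk - η * (1 - L * η * (1 + om) / 2) * ‖g‖ ^ 2 := by ring
end

section
/- Let f : ℝ^d → ℝ be convex and differentiable with L-Lipschitz continuous gradient and minimizer x*, let ω ≥ 0, and let 0 < η with L η (1+ω) < 2. For the one-step CGD update x^{k+1} = x^k − η C(∇f(x^k)) with C an ω-compression operator, it holds that E[ (η(1+ω)/(1 − Lη(1+ω)/2)) (f(x^{k+1}) − f(x*)) + ‖x^{k+1} − x*‖² ] + 2η (f(x^k) − f(x*)) ≤ (η(1+ω)/(1 − Lη(1+ω)/2)) (f(x^k) − f(x*)) + ‖x^k − x*‖², where the expectation is over the randomness of C. -/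
open MeasureTheory RealInnerProductSpace

lemma cgd_deriv_aux {d : ℕ} {f : EuclideanSpace ℝ (Fin d) → ℝ}
    (hdiff : Differentiable ℝ f) (x y : EuclideanSpace ℝ (Fin d)) (t : ℝ) :
    HasDerivAt (fun s : ℝ => f (x + s • (y - x)))
      ⟪gradient f (x + t • (y - x)), y - x⟫ t := by
  have hc : HasDerivAt (fun s : ℝ => x + s • (y - x)) (y - x) t := by
    simpa using ((hasDerivAt_id t).smul_const (y - x)).const_add x
  have hg := (hdiff (x + t • (y - x))).hasGradientAt
  rw [hasGradientAt_iff_hasFDerivAt] at hg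
  have := hg.comp_hasDerivAt t hc
  simp only [Function.comp_def] at this
  exact this

lemma cgd_convex_grad {d : ℕ} {f : EuclideanSpace ℝ (Fin d) → ℝ}
    (hconv : ConvexOn ℝ Set.univ f) (hdiff : Differentiable ℝ f)
    (x y : EuclideanSpace ℝ (Fin d)) :
    f x + ⟪gradient f x, y - x⟫ ≤ f y := by
  set φ : ℝ → ℝ := fun s => f (x + s • (y - x)) with hφ
  have hφconv : ConvexOn ℝ Set.univ φ := by
    have := hconv.comp_affineMap (AffineMap.lineMap x y : ℝ →ᵃ[ℝ] _)
    simp only [Set.preimage_univ] at this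
    convert this using 1
    all_goals try rfl
    funext s
    simp [φ, AffineMap.lineMap_apply, add_comm]
  have h0 : HasDerivAt φ ⟪gradient f x, y - x⟫ 0 := by
    have := cgd_deriv_aux hdiff x y 0
    rwa [zero_smul, add_zero] at this
  have := hφconv.le_slope_of_hasDerivAt (Set.mem_univ (0:ℝ)) (Set.mem_univ (1:ℝ))
    one_pos h0
  simp only [slope_def_field] at this
  have h1 : φ 1 = f y := by simp [φ]
  have h02 : φ 0 = f x := by simp [φ]
  rw [h1, h02] at this
  linarith [this]

lemma cgd_descent {d : ℕ} {f : EuclideanSpace ℝ (Fin d) → ℝ} {L : ℝ} (hL : 0 ≤ L)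
    (hdiff : Differentiable ℝ f)
    (hlip : ∀ x y, ‖gradient f x - gradient f y‖ ≤ L * ‖x - y‖)
    (x y : EuclideanSpace ℝ (Fin d)) :
    f y ≤ f x + ⟪gradient f x, y - x⟫ + L / 2 * ‖y - x‖ ^ 2 := by
  set v := y - x with hv
  have hgc : Continuous (gradient f) := by
    refine LipschitzWith.continuous (K := ⟨L, hL⟩) (LipschitzWith.of_dist_le_mul ?_)
    intro a b
    rw [dist_eq_norm, dist_eq_norm]; exact hlip a b
  have hcurve : Continuous (fun s : ℝ => x + s • v) :=
    continuous_const.add (continuous_id.smul continuous_const)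
  have hcont : Continuous (fun s : ℝ => ⟪gradient f (x + s • v), v⟫) :=
    Continuous.inner (hgc.comp hcurve) continuous_const
  have hftc : (∫ t in (0:ℝ)..1, ⟪gradient f (x + t • v), v⟫) = f y - f x := by
    have := intervalIntegral.integral_eq_sub_of_hasDerivAt
      (f := fun s : ℝ => f (x + s • v))
      (fun t _ => cgd_deriv_aux hdiff x y t)
      (hcont.intervalIntegrable 0 1)
    simpa [v] using this
  have hmono : (∫ t in (0:ℝ)..1, ⟪gradient f (x + t • v), v⟫)
      ≤ ∫ t in (0:ℝ)..1, (⟪gradient f x, v⟫ + L * t * ‖v‖ ^ 2) := by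
    refine intervalIntegral.integral_mono_on zero_le_one
      (hcont.intervalIntegrable 0 1)
      ((continuous_const.add ((continuous_const.mul continuous_id').mul continuous_const) : Continuous fun t : ℝ => ⟪gradient f x, v⟫ + L * t * ‖v‖ ^ 2).intervalIntegrable 0 1) ?_
    intro t ht
    have key : ⟪gradient f (x + t • v) - gradient f x, v⟫ ≤ L * t * ‖v‖ ^ 2 := by
      calc ⟪gradient f (x + t • v) - gradient f x, v⟫
          ≤ ‖gradient f (x + t • v) - gradient f x‖ * ‖v‖ := real_inner_le_norm _ _
        _ ≤ (L * ‖(x + t • v) - x‖) * ‖v‖ := by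
            exact mul_le_mul_of_nonneg_right (hlip _ _) (norm_nonneg _)
        _ = L * t * ‖v‖ ^ 2 := by
            have : ‖(x + t • v) - x‖ = t * ‖v‖ := by
              simp [norm_smul, abs_of_nonneg ht.1]
            rw [this]; ring
    have := inner_sub_left (𝕜 := ℝ) (gradient f (x + t • v)) (gradient f x) v
    linarith [key, this.symm.le, this.le]
  have hrhs : (∫ t in (0:ℝ)..1, (⟪gradient f x, v⟫ + L * t * ‖v‖ ^ 2))
      = ⟪gradient f x, v⟫ + L / 2 * ‖v‖ ^ 2 := by
    rw [intervalIntegral.integral_add (intervalIntegrable_const)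
      ((by fun_prop : Continuous fun t : ℝ => L * t * ‖v‖ ^ 2).intervalIntegrable 0 1)]
    simp only [intervalIntegral.integral_const, smul_eq_mul]
    have : (∫ t in (0:ℝ)..1, L * t * ‖v‖ ^ 2) = L / 2 * ‖v‖ ^ 2 := by
      have : (fun t : ℝ => L * t * ‖v‖ ^ 2) = fun t : ℝ => (L * ‖v‖ ^ 2) * t := by
        funext t; ring
      rw [this, intervalIntegral.integral_const_mul, integral_id]
      ring
    rw [this]; ring
  linarith [hftc ▸ hmono, hrhs ▸ hmono]

set_option maxHeartbeats 1000000 in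
theorem cgd_one_step_lyapunov {d : ℕ}
    (f : EuclideanSpace ℝ (Fin d) → ℝ) (L : ℝ)
    (hconv : ConvexOn ℝ Set.univ f) (hdiff : Differentiable ℝ f)
    (hlip : ∀ x y, ‖gradient f x - gradient f y‖ ≤ L * ‖x - y‖)
    (xstar : EuclideanSpace ℝ (Fin d)) (hmin : ∀ x, f xstar ≤ f x)
    (om η : ℝ) (hom : 0 ≤ om) (hη : 0 < η) (hηL : L * η * (1 + om) < 2)
    {Ω : Type*} [MeasureSpace Ω] [IsProbabilityMeasure (volume : Measure Ω)]
    (C : Ω → EuclideanSpace ℝ (Fin d) → EuclideanSpace ℝ (Fin d))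
    (hCint : ∀ v, Integrable (fun ω => C ω v))
    (hCmean : ∀ v, (∫ ω, C ω v) = v)
    (hCsqint : ∀ v, Integrable (fun ω => ‖C ω v - v‖ ^ 2))
    (hCvar : ∀ v, (∫ ω, ‖C ω v - v‖ ^ 2) ≤ om * ‖v‖ ^ 2)
    (xk : EuclideanSpace ℝ (Fin d)) (xnext : Ω → EuclideanSpace ℝ (Fin d))
    (hx : ∀ ω, xnext ω = xk - η • C ω (gradient f xk)) :
    (∫ ω, (η * (1 + om) / (1 - L * η * (1 + om) / 2) * (f (xnext ω) - f xstar)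
          + ‖xnext ω - xstar‖ ^ 2))
        + 2 * η * (f xk - f xstar)
      ≤ η * (1 + om) / (1 - L * η * (1 + om) / 2) * (f xk - f xstar)
        + ‖xk - xstar‖ ^ 2 := by
  by_cases hL : 0 ≤ L
  swap
  · push_neg at hL
    have hsub : ∀ a b : EuclideanSpace ℝ (Fin d), a = b := by
      intro a b
      have h1 := hlip a b
      have h2 : ‖a - b‖ = 0 := by
        nlinarith [norm_nonneg (gradient f a - gradient f b), norm_nonneg (a - b)]
      exact sub_eq_zero.mp (norm_eq_zero.mp h2)
    have h1 : ∀ ω, xnext ω = xstar := fun ω => hsub _ _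
    have h2 : xk = xstar := hsub _ _
    simp [h1, h2]
  · -- main case
    set g := gradient f xk with hg
    have hPpos : 0 < 1 - L * η * (1 + om) / 2 := by linarith
    set P := 1 - L * η * (1 + om) / 2 with hP
    set A := η * (1 + om) / P with hA
    set D := xk - xstar with hD
    have hApos : 0 < A := div_pos (mul_pos hη (by linarith)) hPpos
    have hAP : A * P = η * (1 + om) := by
      rw [hA]; field_simp
    clear_value g P A D
    -- integrability facts
    have Ic : Integrable (fun ω => C ω g) := hCint g
    have Icg : Integrable (fun ω => C ω g - g) := Ic.sub (integrable_const g)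
    have Isq : Integrable (fun ω => ‖C ω g - g‖ ^ 2) := hCsqint g
    have Iig : Integrable (fun ω => ⟪g, C ω g - g⟫) := Icg.const_inner g
    have Iig2 : Integrable (fun ω => 2 * ⟪g, C ω g - g⟫) := Iig.const_mul 2
    have I12 : Integrable (fun ω => ‖C ω g - g‖ ^ 2 + 2 * ⟪g, C ω g - g⟫) :=
      Isq.add Iig2
    have hcsq_eq : ∀ ω : Ω, ‖C ω g‖ ^ 2
        = ‖C ω g - g‖ ^ 2 + 2 * ⟪g, C ω g - g⟫ + ‖g‖ ^ 2 := by
      intro ω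
      have h := norm_add_sq_real (C ω g - g) g
      rw [sub_add_cancel, real_inner_comm] at h
      linarith
    have Icsq : Integrable (fun ω => ‖C ω g‖ ^ 2) := by
      have he : (fun ω => ‖C ω g‖ ^ 2)
          = fun ω => ‖C ω g - g‖ ^ 2 + 2 * ⟪g, C ω g - g⟫ + ‖g‖ ^ 2 := funext hcsq_eq
      rw [he]
      exact I12.add (integrable_const _)
    have hint_cg : (∫ ω, (C ω g - g)) = 0 := by
      rw [integral_sub Ic (integrable_const g), hCmean g, integral_const]
      simp
    set S := ∫ ω, ‖C ω g‖ ^ 2 with hSdef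
    have hS : S ≤ (1 + om) * ‖g‖ ^ 2 := by
      have h1 : S = (∫ ω, ‖C ω g - g‖ ^ 2) + ‖g‖ ^ 2 := by
        rw [hSdef, funext hcsq_eq, integral_add I12 (integrable_const _),
          integral_add Isq Iig2, integral_const_mul,
          integral_inner Icg g, hint_cg, inner_zero_right, integral_const]
        simp
      have := hCvar g
      rw [h1]; linarith
    clear_value S
    have Iinner_gc : Integrable (fun ω => ⟪g, C ω g⟫) := Ic.const_inner g
    have Jgc : (∫ ω, ⟪g, C ω g⟫) = ‖g‖ ^ 2 := by
      rw [integral_inner Ic g, hCmean g, real_inner_self_eq_norm_sq]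
    have Iinner_Dc : Integrable (fun ω => ⟪D, C ω g⟫) := Ic.const_inner D
    have JDc : (∫ ω, ⟪D, C ω g⟫) = ⟪D, g⟫ := by
      rw [integral_inner Ic D, hCmean g]
    -- pointwise norm expansion
    have hxe : ∀ ω, ‖xnext ω - xstar‖ ^ 2
        = ‖D‖ ^ 2 - 2 * η * ⟪D, C ω g⟫ + η ^ 2 * ‖C ω g‖ ^ 2 := by
      intro ω
      have h1 : xnext ω - xstar = D - η • C ω g := by
        rw [hx ω, hD]; abel
      rw [h1, norm_sub_sq_real, inner_smul_right, norm_smul,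
        Real.norm_eq_abs, abs_of_pos hη, mul_pow]
      ring
    have IDc2 : Integrable (fun ω => 2 * η * ⟪D, C ω g⟫) := Iinner_Dc.const_mul (2 * η)
    have Icsq2 : Integrable (fun ω => η ^ 2 * ‖C ω g‖ ^ 2) := Icsq.const_mul (η ^ 2)
    have Isub1 : Integrable (fun ω => ‖D‖ ^ 2 - 2 * η * ⟪D, C ω g⟫) :=
      (integrable_const _).sub IDc2
    have Inorm : Integrable (fun ω => ‖xnext ω - xstar‖ ^ 2) := by
      rw [funext hxe]
      exact Isub1.add Icsq2
    have Knorm : (∫ ω, ‖xnext ω - xstar‖ ^ 2)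
        = ‖D‖ ^ 2 - 2 * η * ⟪D, g⟫ + η ^ 2 * S := by
      rw [funext hxe, integral_add Isub1 Icsq2,
        integral_sub (integrable_const _) IDc2,
        integral_const_mul, integral_const_mul, integral_const, JDc, hSdef]
      simp
    -- descent bound
    have hdesc : ∀ ω, f (xnext ω)
        ≤ f xk - η * ⟪g, C ω g⟫ + L / 2 * η ^ 2 * ‖C ω g‖ ^ 2 := by
      intro ω
      have h0 := cgd_descent hL hdiff hlip xk (xnext ω)
      have h2 : xnext ω - xk = -(η • C ω g) := by rw [hx ω]; abel
      rw [h2, inner_neg_right, inner_smul_right, norm_neg, norm_smul,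
        Real.norm_eq_abs, abs_of_pos hη, mul_pow, ← hg] at h0
      nlinarith [h0]
    have Igc2 : Integrable (fun ω => η * ⟪g, C ω g⟫) := Iinner_gc.const_mul η
    have Icsq3 : Integrable (fun ω => L / 2 * η ^ 2 * ‖C ω g‖ ^ 2) :=
      Icsq.const_mul (L / 2 * η ^ 2)
    have Iq1 : Integrable (fun ω => f xk - η * ⟪g, C ω g⟫) :=
      (integrable_const _).sub Igc2
    have Iq : Integrable (fun ω => f xk - η * ⟪g, C ω g⟫
        + L / 2 * η ^ 2 * ‖C ω g‖ ^ 2) := Iq1.add Icsq3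
    have Ibnd : Integrable (fun ω =>
        |f xk - η * ⟪g, C ω g⟫ + L / 2 * η ^ 2 * ‖C ω g‖ ^ 2| + |f xstar|) :=
      Iq.abs.add (integrable_const _)
    have hxm : AEStronglyMeasurable xnext volume := by
      have he : xnext = fun ω => xk - η • C ω g := funext hx
      rw [he]
      exact aestronglyMeasurable_const.sub (Ic.aestronglyMeasurable.const_smul η)
    have Ifx : Integrable (fun ω => f (xnext ω)) := by
      refine Integrable.mono' Ibnd
        (hdiff.continuous.comp_aestronglyMeasurable hxm)
        (Filter.Eventually.of_forall fun ω => ?_)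
      rw [Real.norm_eq_abs, abs_le]
      constructor
      · have h1 := hmin (xnext ω)
        have h2 := neg_abs_le (f xstar)
        have h3 := abs_nonneg (f xk - η * ⟪g, C ω g⟫ + L / 2 * η ^ 2 * ‖C ω g‖ ^ 2)
        linarith
      · have h1 := hdesc ω
        have h2 := le_abs_self (f xk - η * ⟪g, C ω g⟫ + L / 2 * η ^ 2 * ‖C ω g‖ ^ 2)
        have h3 := abs_nonneg (f xstar)
        linarith
    have Kf : (∫ ω, f (xnext ω)) ≤ f xk - η * ‖g‖ ^ 2 + L / 2 * η ^ 2 * S := by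
      have h1 : (∫ ω, f (xnext ω)) ≤ ∫ ω, (f xk - η * ⟪g, C ω g⟫
          + L / 2 * η ^ 2 * ‖C ω g‖ ^ 2) := integral_mono Ifx Iq hdesc
      have h2 : (∫ ω, (f xk - η * ⟪g, C ω g⟫ + L / 2 * η ^ 2 * ‖C ω g‖ ^ 2))
          = f xk - η * ‖g‖ ^ 2 + L / 2 * η ^ 2 * S := by
        rw [integral_add Iq1 Icsq3, integral_sub (integrable_const _) Igc2,
          integral_const_mul, integral_const_mul, integral_const, Jgc, hSdef]
        simp
      linarith
    -- split goal integral
    have Ifx1 : Integrable (fun ω => A * (f (xnext ω) - f xstar)) :=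
      (Ifx.sub (integrable_const _)).const_mul A
    have hsplit : (∫ ω, (A * (f (xnext ω) - f xstar) + ‖xnext ω - xstar‖ ^ 2))
        = A * ((∫ ω, f (xnext ω)) - f xstar) + ∫ ω, ‖xnext ω - xstar‖ ^ 2 := by
      rw [integral_add Ifx1 Inorm, integral_const_mul,
        integral_sub Ifx (integrable_const _), integral_const]
      simp
    rw [hsplit, Knorm]
    -- convexity inequality
    have hconvineq : f xk - f xstar ≤ ⟪D, g⟫ := by
      have h0 := cgd_convex_grad hconv hdiff xk xstar
      have h2 : ⟪g, xstar - xk⟫ = -⟪D, g⟫ := by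
        rw [real_inner_comm, hD, ← neg_sub xk xstar, inner_neg_left]
      rw [← hg] at h0
      linarith [h0, h2.le, h2.ge]
    -- final arithmetic
    have hcoefP : (A * (L / 2 * η ^ 2) + η ^ 2) * P = η ^ 2 := by
      linear_combination (L / 2 * η ^ 2) * hAP + η ^ 2 * hP
    have hcoefpos : 0 < A * (L / 2 * η ^ 2) + η ^ 2 := by
      nlinarith [hcoefP, hPpos, mul_pos hη hη]
    have h2 : (A * (L / 2 * η ^ 2) + η ^ 2) * S
        ≤ (A * (L / 2 * η ^ 2) + η ^ 2) * ((1 + om) * ‖g‖ ^ 2) :=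
      mul_le_mul_of_nonneg_left hS hcoefpos.le
    have h3 : (A * (L / 2 * η ^ 2) + η ^ 2) * ((1 + om) * ‖g‖ ^ 2)
        = A * η * ‖g‖ ^ 2 := by
      apply mul_right_cancel₀ hPpos.ne'
      linear_combination ((1 + om) * ‖g‖ ^ 2) * hcoefP - (η * ‖g‖ ^ 2) * hAP
    have hBle : A * (L / 2 * η ^ 2) * S + η ^ 2 * S ≤ A * η * ‖g‖ ^ 2 := by
      calc A * (L / 2 * η ^ 2) * S + η ^ 2 * S
          = (A * (L / 2 * η ^ 2) + η ^ 2) * S := by ring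
        _ ≤ (A * (L / 2 * η ^ 2) + η ^ 2) * ((1 + om) * ‖g‖ ^ 2) := h2
        _ = A * η * ‖g‖ ^ 2 := h3
    have h1' : A * ((∫ ω, f (xnext ω)) - f xstar)
        ≤ A * (f xk - f xstar) - A * η * ‖g‖ ^ 2 + A * (L / 2 * η ^ 2) * S := by
      have hk := mul_le_mul_of_nonneg_left Kf hApos.le
      have he : A * (f xk - η * ‖g‖ ^ 2 + L / 2 * η ^ 2 * S)
          = A * f xk - A * η * ‖g‖ ^ 2 + A * (L / 2 * η ^ 2) * S := by ring
      rw [he] at hk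
      linarith only [hk]
    have hc2 : 2 * η * (f xk - f xstar) ≤ 2 * η * ⟪D, g⟫ :=
      mul_le_mul_of_nonneg_left hconvineq (by positivity)
    linarith only [h1', hBle, hc2]
end

section
/- Let f : ℝ^d → ℝ be differentiable, let y^k, z^k ∈ ℝ^d, let η > 0, γ > 0, β, p ≠ 0, and θ = (1 − γ/p)/(1 − βγ/p) with βγ/p ≠ 1. Set x^k = θ y^k + (1 − θ) z^k, let g^k be a square-integrable random vector with E[g^k] = ∇f(x^k), and define y^{k+1} = x^k − (η/p) g^k and z^{k+1} = (1/γ) y^{k+1} + (1/p − 1/γ) y^k + (1 − 1/p)(1 − β) z^k + (1 − 1/p) β x^k. Then for every x ∈ ℝ^d: E[‖z^{k+1} − x‖²] = (1 − β)‖z^k − x‖² − β(1 − β)‖x^k − z^k‖² + β‖x^k − x‖² + (η²/(γ² p²)) E[‖g^k‖²] + (2η/γ²) ⟨∇f(x^k), (1 − γ/p)(y^k − x^k) + (γ/p)(x − x^k)⟩. -/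
open MeasureTheory RealInnerProductSpace

set_option maxHeartbeats 1000000 in
theorem acgd_z_recursion_identity {d : ℕ}
    (f : EuclideanSpace ℝ (Fin d) → ℝ) (hdiff : Differentiable ℝ f)
    (yk zk : EuclideanSpace ℝ (Fin d))
    (η γ β p : ℝ) (hη : 0 < η) (hγ : 0 < γ) (hp : p ≠ 0)
    (hβγp : β * γ / p ≠ 1)
    (θ : ℝ) (hθ : θ = (1 - γ / p) / (1 - β * γ / p))
    (xk : EuclideanSpace ℝ (Fin d)) (hxk : xk = θ • yk + (1 - θ) • zk)
    {Ω : Type*} [MeasureSpace Ω] [IsProbabilityMeasure (volume : Measure Ω)]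
    (g : Ω → EuclideanSpace ℝ (Fin d))
    (hgint : Integrable g)
    (hgsq : Integrable (fun ω => ‖g ω‖ ^ 2))
    (hgmean : (∫ ω, g ω) = gradient f xk)
    (ynext znext : Ω → EuclideanSpace ℝ (Fin d))
    (hy : ∀ ω, ynext ω = xk - (η / p) • g ω)
    (hz : ∀ ω, znext ω = (1 / γ) • ynext ω + (1 / p - 1 / γ) • yk
        + ((1 - 1 / p) * (1 - β)) • zk + ((1 - 1 / p) * β) • xk)
    (x : EuclideanSpace ℝ (Fin d)) :
    (∫ ω, ‖znext ω - x‖ ^ 2)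
      = (1 - β) * ‖zk - x‖ ^ 2 - β * (1 - β) * ‖xk - zk‖ ^ 2 + β * ‖xk - x‖ ^ 2
        + η ^ 2 / (γ ^ 2 * p ^ 2) * (∫ ω, ‖g ω‖ ^ 2)
        + 2 * η / γ ^ 2
          * ⟪gradient f xk, (1 - γ / p) • (yk - xk) + (γ / p) • (x - xk)⟫ := by
  have hγ' : γ ≠ 0 := ne_of_gt hγ
  have hβγp' : (1 : ℝ) - β * γ / p ≠ 0 := sub_ne_zero.mpr (Ne.symm hβγp)
  have hpβγ : p - β * γ ≠ 0 := by
    intro h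
    apply hβγp'
    have hbg : β * γ = p := by linarith
    simp [hbg, div_self hp]
  have hpβγ2 : p - γ * β ≠ 0 := by rwa [mul_comm γ β]
  set c : ℝ := η / (γ * p) with hc
  set C : EuclideanSpace ℝ (Fin d) :=
    (1 / γ) • xk + (1 / p - 1 / γ) • yk + ((1 - 1 / p) * (1 - β)) • zk
      + ((1 - 1 / p) * β) • xk with hC
  set v := gradient f xk with hv
  have hzn : ∀ ω, znext ω - x = (C - x) - c • g ω := by
    intro ω
    rw [hz ω, hy ω, hC, hc]
    match_scalars <;> field_simp
  have hA : C = (1 - β) • zk + β • xk := by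
    rw [hC, hxk, hθ]
    match_scalars <;> field_simp <;> ring
  have hB : (-(2 * c)) • (C - x)
      = (2 * η / γ ^ 2) • ((1 - γ / p) • (yk - xk) + (γ / p) • (x - xk)) := by
    rw [hA, hxk, hθ, hc]
    match_scalars <;> field_simp <;> ring
  have hpt : ∀ ω, ‖znext ω - x‖ ^ 2
      = ‖C - x‖ ^ 2 - 2 * c * ⟪C - x, g ω⟫ + c ^ 2 * ‖g ω‖ ^ 2 := by
    intro ω
    rw [hzn ω, norm_sub_sq_real, real_inner_smul_right, norm_smul]
    simp only [Real.norm_eq_abs, mul_pow, sq_abs]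
    ring
  have hint1 : Integrable (fun ω => (⟪C - x, g ω⟫ : ℝ)) := hgint.const_inner _
  calc (∫ ω, ‖znext ω - x‖ ^ 2)
      = ∫ ω, (‖C - x‖ ^ 2 - 2 * c * ⟪C - x, g ω⟫ + c ^ 2 * ‖g ω‖ ^ 2) := by
        simp only [hpt]
    _ = ‖C - x‖ ^ 2 - 2 * c * ⟪C - x, ∫ ω, g ω⟫ + c ^ 2 * ∫ ω, ‖g ω‖ ^ 2 := by
        have hf2 : Integrable (fun ω => 2 * c * (⟪C - x, g ω⟫ : ℝ)) :=
          hint1.const_mul (2 * c)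
        have hf1 : Integrable (fun ω => ‖C - x‖ ^ 2 - 2 * c * (⟪C - x, g ω⟫ : ℝ)) :=
          (integrable_const _).sub hf2
        have hf3 : Integrable (fun ω => c ^ 2 * ‖g ω‖ ^ 2) := hgsq.const_mul (c ^ 2)
        rw [integral_add hf1 hf3, integral_sub (integrable_const _) hf2,
          integral_const_mul, integral_const_mul, integral_inner hgint, integral_const]
        simp
    _ = _ := by
        rw [hgmean]
        have key : ∀ (a b : EuclideanSpace ℝ (Fin d)),
            ‖(1 - β) • a + β • b‖ ^ 2
              = (1 - β) * ‖a‖ ^ 2 - β * (1 - β) * ‖b - a‖ ^ 2 + β * ‖b‖ ^ 2 := by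
          intro a b
          simp only [← real_inner_self_eq_norm_sq, inner_sub_left, inner_sub_right,
            inner_add_left, inner_add_right, real_inner_smul_left, real_inner_smul_right]
          rw [real_inner_comm b a]
          ring
        have hnorm : ‖C - x‖ ^ 2
            = (1 - β) * ‖zk - x‖ ^ 2 - β * (1 - β) * ‖xk - zk‖ ^ 2
              + β * ‖xk - x‖ ^ 2 := by
          have e1 : C - x = (1 - β) • (zk - x) + β • (xk - x) := by
            rw [hA]; module
          rw [e1, key (zk - x) (xk - x),
            show xk - x - (zk - x) = xk - zk by abel]
        have hinner : -(2 * c * ⟪C - x, v⟫)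
            = 2 * η / γ ^ 2 * ⟪v, (1 - γ / p) • (yk - xk) + (γ / p) • (x - xk)⟫ := by
          have h := congrArg (fun w => (⟪v, w⟫ : ℝ)) hB
          simp only [real_inner_smul_right] at h
          rw [real_inner_comm v (C - x)]
          linarith
        have hc2 : c ^ 2 = η ^ 2 / (γ ^ 2 * p ^ 2) := by
          rw [hc, div_pow, mul_pow]
        rw [hnorm, hc2]
        linarith [hinner]
end

section
/- Let f : ℝ^d → ℝ be μ-strongly convex (μ ≥ 0) and differentiable with L-Lipschitz continuous gradient. Let x^k, y^k ∈ ℝ^d, η > 0, p ≠ 0, 0 ≤ γ/p ≤ 1, let g be a square-integrable random vector with E[g] = ∇f(x^k), and set y^{k+1} = x^k − (η/p) g. Then for every x ∈ ℝ^d: E[f(y^{k+1})] ≤ (1 − γ/p) f(y^k) + (γ/p) f(x) − ⟨∇f(x^k), (1 − γ/p)(y^k − x^k) + (γ/p)(x − x^k)⟩ − (1 − γ/p)(μ/2)‖y^k − x^k‖² − (γμ/(2p))‖x − x^k‖² − (η/p)‖∇f(x^k)‖² + (Lη²/(2p²)) E[‖g‖²]. -/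
open MeasureTheory RealInnerProductSpace

lemma descent {d : ℕ} (f : EuclideanSpace ℝ (Fin d) → ℝ) (L : ℝ)
    (hdiff : Differentiable ℝ f)
    (hlip : ∀ x y, ‖gradient f x - gradient f y‖ ≤ L * ‖x - y‖)
    (a v : EuclideanSpace ℝ (Fin d)) :
    f (a + v) ≤ f a + ⟪gradient f a, v⟫ + L / 2 * ‖v‖ ^ 2 := by
  have hgradcont : Continuous (gradient f) := by
    have : LipschitzWith (Real.toNNReal L) (gradient f) := by
      apply LipschitzWith.of_dist_le_mul
      intro x y
      simp only [dist_eq_norm]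
      calc ‖gradient f x - gradient f y‖ ≤ L * ‖x - y‖ := hlip x y
        _ ≤ Real.toNNReal L * ‖x - y‖ :=
            mul_le_mul_of_nonneg_right (Real.le_coe_toNNReal L) (norm_nonneg _)
    exact this.continuous
  set φ' : ℝ → ℝ := fun t => ⟪gradient f (a + t • v), v⟫ with hφ'
  have hderiv : ∀ t, HasDerivAt (fun t : ℝ => f (a + t • v)) (φ' t) t := by
    intro t
    have h1 : HasDerivAt (fun t : ℝ => a + t • v) v t := by
      simpa using ((hasDerivAt_id t).smul_const v).const_add a
    have h2 := (hdiff (a + t • v)).hasGradientAt.hasFDerivAt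
    have := h2.comp_hasDerivAt t h1
    have e : fderiv ℝ f (a + t • v) v = φ' t := by
      simp only [hφ', gradient, InnerProductSpace.toDual_symm_apply]
    simpa [InnerProductSpace.toDual, e, Function.comp_def] using this
  have hcont : Continuous φ' := by
    apply Continuous.inner
    · exact hgradcont.comp (continuous_const.add (continuous_id.smul continuous_const))
    · exact continuous_const
  have hint : IntervalIntegrable φ' volume 0 1 := hcont.intervalIntegrable 0 1
  have key : f (a + v) - f a = ∫ t in (0:ℝ)..1, φ' t := by
    have := intervalIntegral.integral_eq_sub_of_hasDerivAt
      (f := fun t : ℝ => f (a + t • v)) (f' := φ') (a := 0) (b := 1)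
      (fun t _ => hderiv t) hint
    simp at this
    linarith [this]
  have hbound : ∀ t ∈ Set.Icc (0:ℝ) 1, φ' t ≤ φ' 0 + L * t * ‖v‖ ^ 2 := by
    intro t ht
    have : φ' t - φ' 0 ≤ L * t * ‖v‖ ^ 2 := by
      have h1 : φ' t - φ' 0 = ⟪gradient f (a + t • v) - gradient f a, v⟫ := by
        simp [hφ', inner_sub_left]
      rw [h1]
      calc ⟪gradient f (a + t • v) - gradient f a, v⟫
          ≤ ‖gradient f (a + t • v) - gradient f a‖ * ‖v‖ := real_inner_le_norm _ _
        _ ≤ (L * ‖(a + t • v) - (a + (0:ℝ) • v)‖) * ‖v‖ :=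
            mul_le_mul_of_nonneg_right (by simpa using hlip (a + t • v) (a + (0:ℝ) • v))
              (norm_nonneg _)
        _ = L * t * ‖v‖ ^ 2 := by
            rw [show (a + t • v) - (a + (0:ℝ) • v) = t • v by module]
            rw [norm_smul]
            simp [abs_of_nonneg ht.1]
            ring
    linarith
  have hmono : (∫ t in (0:ℝ)..1, φ' t) ≤ ∫ t in (0:ℝ)..1, (φ' 0 + L * t * ‖v‖ ^ 2) := by
    apply intervalIntegral.integral_mono_on (by norm_num) hint
    · apply IntervalIntegrable.add intervalIntegrable_const
      exact (((continuous_const.mul continuous_id).mul continuous_const).intervalIntegrable _ _)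
    · exact hbound
  have hcalc : (∫ t in (0:ℝ)..1, (φ' 0 + L * t * ‖v‖ ^ 2)) = φ' 0 + L / 2 * ‖v‖ ^ 2 := by
    rw [intervalIntegral.integral_add intervalIntegrable_const]
    · rw [intervalIntegral.integral_const]
      have : (∫ t in (0:ℝ)..1, L * t * ‖v‖ ^ 2) = (L * ‖v‖ ^ 2) * ∫ t in (0:ℝ)..1, t := by
        rw [← intervalIntegral.integral_const_mul]; congr 1; ext t; ring
      rw [this, integral_id]
      simp; ring
    · exact (((continuous_const.mul continuous_id).mul continuous_const).intervalIntegrable _ _)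
  have h0 : φ' 0 = ⟪gradient f a, v⟫ := by simp [hφ']
  linarith [key, hmono, hcalc.le, hcalc.ge]

theorem acgd_y_descent {d : ℕ}
    (f : EuclideanSpace ℝ (Fin d) → ℝ) (L μ : ℝ) (hμ : 0 ≤ μ)
    (hdiff : Differentiable ℝ f)
    (hlip : ∀ x y, ‖gradient f x - gradient f y‖ ≤ L * ‖x - y‖)
    (hsc : ∀ x y, μ / 2 * ‖x - y‖ ^ 2 ≤ f x - f y - ⟪gradient f y, x - y⟫)
    (xk yk : EuclideanSpace ℝ (Fin d))
    (η γ p : ℝ) (hη : 0 < η) (hp : p ≠ 0) (hγp0 : 0 ≤ γ / p) (hγp1 : γ / p ≤ 1)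
    {Ω : Type*} [MeasureSpace Ω] [IsProbabilityMeasure (volume : Measure Ω)]
    (g : Ω → EuclideanSpace ℝ (Fin d))
    (hgint : Integrable g)
    (hgsq : Integrable (fun ω => ‖g ω‖ ^ 2))
    (hgmean : (∫ ω, g ω) = gradient f xk)
    (ynext : Ω → EuclideanSpace ℝ (Fin d))
    (hy : ∀ ω, ynext ω = xk - (η / p) • g ω)
    (x : EuclideanSpace ℝ (Fin d)) :
    (∫ ω, f (ynext ω))
      ≤ (1 - γ / p) * f yk + (γ / p) * f x
        - ⟪gradient f xk, (1 - γ / p) • (yk - xk) + (γ / p) • (x - xk)⟫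
        - (1 - γ / p) * (μ / 2) * ‖yk - xk‖ ^ 2
        - γ * μ / (2 * p) * ‖x - xk‖ ^ 2
        - η / p * ‖gradient f xk‖ ^ 2
        + L * η ^ 2 / (2 * p ^ 2) * (∫ ω, ‖g ω‖ ^ 2) := by
  set c := η / p with hc
  set G := gradient f xk with hG
  -- pointwise upper bound
  have hub : ∀ ω, f (ynext ω) ≤ f xk + (-c) * ⟪G, g ω⟫ + (L / 2 * c ^ 2) * ‖g ω‖ ^ 2 := by
    intro ω
    have := descent f L hdiff hlip xk (-(c • g ω))
    have he : xk + -(c • g ω) = ynext ω := by rw [hy ω]; abel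
    rw [he] at this
    calc f (ynext ω) ≤ f xk + ⟪G, -(c • g ω)⟫ + L / 2 * ‖-(c • g ω)‖ ^ 2 := this
      _ = f xk + (-c) * ⟪G, g ω⟫ + (L / 2 * c ^ 2) * ‖g ω‖ ^ 2 := by
          rw [inner_neg_right, real_inner_smul_right, norm_neg, norm_smul]
          simp [mul_pow]
          ring
  -- pointwise lower bound
  have hlb : ∀ ω, f xk + (-c) * ⟪G, g ω⟫ ≤ f (ynext ω) := by
    intro ω
    have h1 := hsc (ynext ω) xk
    have h2 : 0 ≤ μ / 2 * ‖ynext ω - xk‖ ^ 2 := by positivity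
    have he : ynext ω - xk = -(c • g ω) := by rw [hy ω]; abel
    have h3 : ⟪G, ynext ω - xk⟫ = (-c) * ⟪G, g ω⟫ := by
      rw [he, inner_neg_right, real_inner_smul_right]; ring
    rw [h3] at h1
    linarith
  -- integrability
  have hinner : Integrable (fun ω => ⟪G, g ω⟫) := hgint.const_inner G
  have hubint : Integrable (fun ω => f xk + (-c) * ⟪G, g ω⟫ + (L / 2 * c ^ 2) * ‖g ω‖ ^ 2) :=
    ((integrable_const _).add (hinner.const_mul _)).add (hgsq.const_mul _)
  have hlbint : Integrable (fun ω => f xk + (-c) * ⟪G, g ω⟫) :=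
    (integrable_const _).add (hinner.const_mul _)
  have hmeas : AEStronglyMeasurable (fun ω => f (ynext ω)) volume := by
    have hyn : AEStronglyMeasurable ynext volume := by
      have : ynext = fun ω => xk - c • g ω := funext hy
      rw [this]
      exact aestronglyMeasurable_const.sub (hgint.aestronglyMeasurable.const_smul c)
    exact hdiff.continuous.comp_aestronglyMeasurable hyn
  have hfint : Integrable (fun ω => f (ynext ω)) := by
    have hdint : Integrable (fun ω => f (ynext ω) - (f xk + (-c) * ⟪G, g ω⟫)) := by
      apply Integrable.mono' (hubint.sub hlbint) (hmeas.sub hlbint.aestronglyMeasurable)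
      filter_upwards with ω
      simp only [Pi.sub_apply]
      rw [Real.norm_eq_abs, abs_of_nonneg (by linarith [hlb ω])]
      linarith [hub ω]
    have h := hdint.add hlbint
    have he : ((fun ω => f (ynext ω) - (f xk + (-c) * ⟪G, g ω⟫))
        + fun ω => f xk + (-c) * ⟪G, g ω⟫) = fun ω => f (ynext ω) := by
      funext ω; simp
    rwa [he] at h
  -- integral bound
  have hIb : (∫ ω, f (ynext ω))
      ≤ ∫ ω, (f xk + (-c) * ⟪G, g ω⟫ + (L / 2 * c ^ 2) * ‖g ω‖ ^ 2) :=
    integral_mono hfint hubint hub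
  have hIcalc : (∫ ω, (f xk + (-c) * ⟪G, g ω⟫ + (L / 2 * c ^ 2) * ‖g ω‖ ^ 2))
      = f xk + (-c) * ‖G‖ ^ 2 + (L / 2 * c ^ 2) * ∫ ω, ‖g ω‖ ^ 2 := by
    have i1 : (∫ ω, (f xk + (-c) * ⟪G, g ω⟫ + (L / 2 * c ^ 2) * ‖g ω‖ ^ 2))
        = (∫ ω, (f xk + (-c) * ⟪G, g ω⟫)) + ∫ ω, (L / 2 * c ^ 2) * ‖g ω‖ ^ 2 :=
      integral_add hlbint (hgsq.const_mul _)
    have i2 : (∫ ω, (f xk + (-c) * ⟪G, g ω⟫))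
        = (∫ _ : Ω, f xk) + ∫ ω, (-c) * ⟪G, g ω⟫ :=
      integral_add (integrable_const _) (hinner.const_mul _)
    rw [i1, i2, integral_const, integral_const_mul, integral_const_mul,
      integral_inner hgint, hgmean]
    have : ⟪G, G⟫ = ‖G‖ ^ 2 := real_inner_self_eq_norm_sq G
    rw [this]
    simp
  -- strong convexity combination
  set α := γ / p with hα
  have hsc1 := hsc yk xk
  have hsc2 := hsc x xk
  have hinner2 : ⟪G, (1 - α) • (yk - xk) + α • (x - xk)⟫
      = (1 - α) * ⟪G, yk - xk⟫ + α * ⟪G, x - xk⟫ := by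
    rw [inner_add_right, real_inner_smul_right, real_inner_smul_right]
  have hfxk : f xk ≤ (1 - α) * f yk + α * f x
      - ((1 - α) * ⟪G, yk - xk⟫ + α * ⟪G, x - xk⟫)
      - (1 - α) * (μ / 2) * ‖yk - xk‖ ^ 2 - α * (μ / 2) * ‖x - xk‖ ^ 2 := by
    nlinarith [mul_le_mul_of_nonneg_left hsc1 (by linarith : (0:ℝ) ≤ 1 - α),
      mul_le_mul_of_nonneg_left hsc2 hγp0]
  have hγμ : γ * μ / (2 * p) = α * (μ / 2) := by
    rw [hα]; ring
  rw [hinner2, hγμ]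
  have hLc : L * η ^ 2 / (2 * p ^ 2) = L / 2 * c ^ 2 := by
    rw [hc]; ring
  rw [hLc]
  linarith [hIb, hIcalc.le, hIcalc.ge]
end

section
/- Let f_1, …, f_n : ℝ^d → ℝ be convex and differentiable with L-Lipschitz continuous gradients (L > 0), and let f = (1/n)∑_{i=1}^n f_i be μ-strongly convex (μ ≥ 0). Then for all x, y, u ∈ ℝ^d: f(y) ≤ f(u) + ⟨∇f(x), y − x⟩ − ⟨∇f(x), u − x⟩ + (L/2)‖y − x‖² − max{ (μ/2)‖u − x‖², (1/(2Ln)) ∑_{i=1}^n ‖∇f_i(u) − ∇f_i(x)‖² }. -/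
open RealInnerProductSpace

section Aux

variable {E : Type*} [NormedAddCommGroup E] [InnerProductSpace ℝ E] [CompleteSpace E]

lemma aux_hasDerivAt_line (g : E → ℝ) (hg : Differentiable ℝ g) (x v : E) (t : ℝ) :
    HasDerivAt (fun s : ℝ => g (x + s • v)) ⟪gradient g (x + t • v), v⟫ t := by
  have hc : HasDerivAt (fun s : ℝ => x + s • v) v t := by
    simpa using ((hasDerivAt_id t).smul_const v).const_add x
  have hF := hasGradientAt_iff_hasFDerivAt.1 ((hg (x + t • v)).hasGradientAt)
  have h := hF.comp_hasDerivAt t hc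
  simp only [InnerProductSpace.toDual_apply_apply] at h
  exact h

lemma aux_convex_first_order (g : E → ℝ) (hg : Differentiable ℝ g)
    (hc : ConvexOn ℝ Set.univ g) (x w : E) :
    g x + ⟪gradient g x, w - x⟫ ≤ g w := by
  set φ : ℝ → ℝ := fun s => g (x + s • (w - x)) with hφ
  have hφc : ConvexOn ℝ Set.univ φ := by
    have := hc.comp_affineMap (AffineMap.lineMap x w : ℝ →ᵃ[ℝ] E)
    simp only [Set.preimage_univ] at this
    have e : φ = g ∘ ⇑(AffineMap.lineMap x w : ℝ →ᵃ[ℝ] E) := by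
      funext s
      simp [φ, AffineMap.lineMap_apply, vsub_eq_sub, vadd_eq_add, add_comm]
    exact (congrArg (ConvexOn ℝ Set.univ) e).mpr this
  have hd : HasDerivAt φ ⟪gradient g (x + (0:ℝ) • (w - x)), w - x⟫ 0 :=
    aux_hasDerivAt_line g hg x (w - x) 0
  have h := hφc.le_slope_of_hasDerivAt (Set.mem_univ (0:ℝ)) (Set.mem_univ (1:ℝ))
    one_pos (by simpa using hd)
  have h0 : φ 0 = g x := by simp [φ]
  have h1 : φ 1 = g w := by simp [φ]
  rw [slope_def_field] at h
  simp only [h0, h1] at h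
  have : ⟪gradient g x, w - x⟫ ≤ g w - g x := by
    simpa [div_one] using h
  linarith

lemma aux_descent (g : E → ℝ) (hg : Differentiable ℝ g) (L : ℝ)
    (hlip : ∀ a b, ‖gradient g a - gradient g b‖ ≤ L * ‖a - b‖) (x y : E) :
    g y ≤ g x + ⟪gradient g x, y - x⟫ + L / 2 * ‖y - x‖ ^ 2 := by
  set v : E := y - x with hv
  set c : ℝ := ⟪gradient g x, v⟫ with hcdef
  set ψ : ℝ → ℝ := fun s => L * s ^ 2 * ‖v‖ ^ 2 / 2 + s * c - g (x + s • v) with hψ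
  have hψd : ∀ s : ℝ, HasDerivAt ψ
      (L * s * ‖v‖ ^ 2 + c - ⟪gradient g (x + s • v), v⟫) s := by
    intro s
    have h1 : HasDerivAt (fun s : ℝ => L * s ^ 2 * ‖v‖ ^ 2 / 2)
        (L * s * ‖v‖ ^ 2) s := by
      have := (hasDerivAt_pow 2 s).const_mul L
      have h2 := (this.mul_const (‖v‖ ^ 2)).div_const 2
      exact h2.congr_deriv (by ring)
    have h3 : HasDerivAt (fun s : ℝ => s * c) c s := by
      simpa using (hasDerivAt_id s).mul_const c
    exact (h1.add h3).sub (aux_hasDerivAt_line g hg x v s)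
  have hmono : MonotoneOn ψ (Set.Icc (0:ℝ) 1) := by
    apply monotoneOn_of_deriv_nonneg (convex_Icc 0 1)
    · exact (Continuous.continuousOn (by
        have : Differentiable ℝ ψ := fun s => (hψd s).differentiableAt
        exact this.continuous))
    · intro s _
      exact ((hψd s).differentiableAt).differentiableWithinAt
    · intro s hs
      rw [interior_Icc] at hs
      rw [(hψd s).deriv]
      have hip : ⟪gradient g (x + s • v) - gradient g x, v⟫
          ≤ L * s * ‖v‖ ^ 2 := by
        calc ⟪gradient g (x + s • v) - gradient g x, v⟫
            ≤ ‖gradient g (x + s • v) - gradient g x‖ * ‖v‖ :=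
              real_inner_le_norm _ _
          _ ≤ (L * ‖(x + s • v) - x‖) * ‖v‖ := by
              apply mul_le_mul_of_nonneg_right (hlip _ _) (norm_nonneg _)
          _ = L * s * ‖v‖ ^ 2 := by
              simp only [add_sub_cancel_left, norm_smul, Real.norm_eq_abs,
                abs_of_pos hs.1]
              ring
      rw [inner_sub_left] at hip
      linarith
  have h01 := hmono (Set.mem_Icc.2 ⟨le_refl 0, zero_le_one⟩)
      (Set.mem_Icc.2 ⟨zero_le_one, le_refl 1⟩) zero_le_one
  have h0 : ψ 0 = -g x := by simp [ψ]
  have h1 : ψ 1 = L * ‖v‖ ^ 2 / 2 + c - g y := by simp [ψ, hv]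
  rw [h0, h1] at h01
  simp only [hcdef] at h01
  linarith

lemma aux_coco (g : E → ℝ) (hg : Differentiable ℝ g) (hc : ConvexOn ℝ Set.univ g)
    (L : ℝ) (hL : 0 < L) (hlip : ∀ a b, ‖gradient g a - gradient g b‖ ≤ L * ‖a - b‖)
    (x u : E) :
    1 / (2 * L) * ‖gradient g u - gradient g x‖ ^ 2
      ≤ g u - g x - ⟪gradient g x, u - x⟫ := by
  set v : E := gradient g u - gradient g x with hv
  set w : E := u - (1 / L) • v with hw
  have h1 := aux_convex_first_order g hg hc x w
  have h2 := aux_descent g hg L hlip u w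
  have e1 : w - u = -((1 / L) • v) := by
    rw [hw]; abel
  have e2 : w - x = (u - x) - (1 / L) • v := by
    rw [hw]; abel
  have i1 : ⟪gradient g u, w - u⟫ = -(1 / L * ⟪gradient g u, v⟫) := by
    rw [e1, inner_neg_right, real_inner_smul_right]
  have i2 : ⟪gradient g x, w - x⟫
      = ⟪gradient g x, u - x⟫ - 1 / L * ⟪gradient g x, v⟫ := by
    rw [e2, inner_sub_right, real_inner_smul_right]
  have i3 : ‖w - u‖ ^ 2 = (1 / L) ^ 2 * ‖v‖ ^ 2 := by
    rw [e1, norm_neg, norm_smul, Real.norm_eq_abs, mul_pow, sq_abs]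
  have i4 : ⟪gradient g u, v⟫ - ⟪gradient g x, v⟫ = ‖v‖ ^ 2 := by
    rw [← inner_sub_left, ← hv, real_inner_self_eq_norm_sq]
  rw [i2] at h1
  rw [i1, i3] at h2
  have hLs : L / 2 * ((1 / L) ^ 2 * ‖v‖ ^ 2) = 1 / (2 * L) * ‖v‖ ^ 2 := by
    field_simp
  rw [hLs] at h2
  have key : 1 / L * ‖v‖ ^ 2 = 1 / L * ⟪gradient g u, v⟫ - 1 / L * ⟪gradient g x, v⟫ := by
    rw [← mul_sub, i4]
  have hL2 : 1 / (2 * L) * ‖v‖ ^ 2 = 1 / L * ‖v‖ ^ 2 - 1 / (2 * L) * ‖v‖ ^ 2 := by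
    field_simp
    ring
  linarith

end Aux

theorem smooth_strongly_convex_mixed_bound {d n : ℕ} (hn : 0 < n)
    (L μ : ℝ) (hL : 0 < L) (hμ : 0 ≤ μ)
    (fi : Fin n → EuclideanSpace ℝ (Fin d) → ℝ)
    (hconv : ∀ i, ConvexOn ℝ Set.univ (fi i))
    (hdiff : ∀ i, Differentiable ℝ (fi i))
    (hlip : ∀ i x y, ‖gradient (fi i) x - gradient (fi i) y‖ ≤ L * ‖x - y‖)
    (f : EuclideanSpace ℝ (Fin d) → ℝ)
    (hf : ∀ x, f x = (1 / (n : ℝ)) * ∑ i, fi i x)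
    (hsc : ∀ x y, μ / 2 * ‖x - y‖ ^ 2 ≤ f x - f y - ⟪gradient f y, x - y⟫)
    (x y u : EuclideanSpace ℝ (Fin d)) :
    f y ≤ f u + ⟪gradient f x, y - x⟫ - ⟪gradient f x, u - x⟫
        + L / 2 * ‖y - x‖ ^ 2
        - max (μ / 2 * ‖u - x‖ ^ 2)
            (1 / (2 * L * n) * ∑ i, ‖gradient (fi i) u - gradient (fi i) x‖ ^ 2) := by
  have hn' : (0:ℝ) < (n:ℝ) := Nat.cast_pos.2 hn
  have hfe : f = fun z => (1 / (n : ℝ)) * ∑ i, fi i z := funext hf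
  have hdf : Differentiable ℝ f := by
    rw [hfe]
    exact (Differentiable.fun_sum fun i _ => hdiff i).const_mul _
  -- gradient of f
  have hgrad : ∀ z, gradient f z = (1 / (n : ℝ)) • ∑ i, gradient (fi i) z := by
    intro z
    have hsum : HasFDerivAt (fun w => ∑ i, fi i w) (∑ i, fderiv ℝ (fi i) z) z :=
      HasFDerivAt.fun_sum fun i _ => (hdiff i z).hasFDerivAt
    have hmul : HasFDerivAt f ((1 / (n : ℝ)) • ∑ i, fderiv ℝ (fi i) z) z := by
      rw [hfe]
      exact hsum.const_mul _
    apply HasGradientAt.gradient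
    rw [hasGradientAt_iff_hasFDerivAt]
    refine hmul.congr_fderiv (Eq.symm ?_)
    rw [map_smul, map_sum]
    congr 1
    refine Finset.sum_congr rfl fun i _ => ?_
    simp only [gradient]
    exact (InnerProductSpace.toDual ℝ _).apply_symm_apply _
  -- Lipschitz gradient for f
  have hlipf : ∀ a b, ‖gradient f a - gradient f b‖ ≤ L * ‖a - b‖ := by
    intro a b
    rw [hgrad a, hgrad b, ← smul_sub, ← Finset.sum_sub_distrib]
    rw [norm_smul, Real.norm_eq_abs, abs_of_pos (by positivity : (0:ℝ) < 1 / (n:ℝ))]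
    calc (1 / (n:ℝ)) * ‖∑ i, (gradient (fi i) a - gradient (fi i) b)‖
        ≤ (1 / (n:ℝ)) * ∑ i, ‖gradient (fi i) a - gradient (fi i) b‖ := by
          apply mul_le_mul_of_nonneg_left (norm_sum_le _ _) (by positivity)
      _ ≤ (1 / (n:ℝ)) * ∑ _i : Fin n, L * ‖a - b‖ := by
          apply mul_le_mul_of_nonneg_left
            (Finset.sum_le_sum fun i _ => hlip i a b) (by positivity)
      _ = L * ‖a - b‖ := by
          rw [Finset.sum_const, Finset.card_univ, Fintype.card_fin, nsmul_eq_mul]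
          field_simp
  -- inner product with gradient of f
  have hinner : ∀ w : EuclideanSpace ℝ (Fin d),
      ⟪gradient f x, w⟫ = (1 / (n : ℝ)) * ∑ i, ⟪gradient (fi i) x, w⟫ := by
    intro w
    rw [hgrad x, real_inner_smul_left, sum_inner]
  -- bound B : cocoercivity part
  have hB : 1 / (2 * L * n) * ∑ i, ‖gradient (fi i) u - gradient (fi i) x‖ ^ 2
      ≤ f u - f x - ⟪gradient f x, u - x⟫ := by
    have hsum : ∑ i, (1 / (2 * L) * ‖gradient (fi i) u - gradient (fi i) x‖ ^ 2)
        ≤ ∑ i, (fi i u - fi i x - ⟪gradient (fi i) x, u - x⟫) :=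
      Finset.sum_le_sum fun i _ =>
        aux_coco (fi i) (hdiff i) (hconv i) L hL (hlip i) x u
    have hmul := mul_le_mul_of_nonneg_left hsum
      (le_of_lt (by positivity : (0:ℝ) < 1 / (n:ℝ)))
    calc 1 / (2 * L * n) * ∑ i, ‖gradient (fi i) u - gradient (fi i) x‖ ^ 2
        = (1 / (n:ℝ)) * ∑ i, (1 / (2 * L) * ‖gradient (fi i) u - gradient (fi i) x‖ ^ 2) := by
          rw [← Finset.mul_sum, ← mul_assoc]
          congr 1
          field_simp
      _ ≤ (1 / (n:ℝ)) * ∑ i, (fi i u - fi i x - ⟪gradient (fi i) x, u - x⟫) := hmul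
      _ = f u - f x - ⟪gradient f x, u - x⟫ := by
          rw [hf u, hf x, hinner (u - x)]
          rw [Finset.sum_sub_distrib, Finset.sum_sub_distrib]
          ring
  -- bound A : strong convexity part
  have hA : μ / 2 * ‖u - x‖ ^ 2 ≤ f u - f x - ⟪gradient f x, u - x⟫ := hsc u x
  -- descent lemma for f
  have hC : f y ≤ f x + ⟪gradient f x, y - x⟫ + L / 2 * ‖y - x‖ ^ 2 :=
    aux_descent f hdf L hlipf x y
  have hmax : max (μ / 2 * ‖u - x‖ ^ 2)
      (1 / (2 * L * n) * ∑ i, ‖gradient (fi i) u - gradient (fi i) x‖ ^ 2)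
      ≤ f u - f x - ⟪gradient f x, u - x⟫ := max_le hA hB
  linarith
end
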